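/- arXiv:1812.09002 — 7 statements merged into one kernel-verified Lean document; each statement's English description precedes it below -/
import Mathlib

section
/- Let (T=(V,E);t,σ) be an event-labeled gene tree on 𝔾, let S=(W,F) be a species tree on 𝕊, and let x∈V with t(x)=𝔰 and children x₁,…,x_k (k≥2) in T. If μ is a TreeNet-reconciliation map from (T;t,σ) to S, then μ(x) ⪰_S q for all q ∈ Q²_S(μ(x₁),…,μ(x_k)); that is, μ(x) is the ⪰_S-maximal element of Q²_S(μ(x₁),…,μ(x_k)). -/
namespace Phylo

/-- A directed multigraph: `tail e` and `head e` give the endpoints of an arc `e`.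
    Multi-arcs are allowed since distinct arcs may have the same endpoints. -/
structure MGraph (V : Type) (E : Type) where
  tail : E → V
  head : E → V

namespace MGraph

variable {V E : Type}

/-- `G.Adj u v` iff there is an arc from `u` to `v`. -/
def Adj (G : MGraph V E) (u v : V) : Prop :=
  ∃ e : E, G.tail e = u ∧ G.head e = v

/-- `G.Reach u v` iff there is a directed path (possibly a single vertex) from `u` to `v`. -/
def Reach (G : MGraph V E) (u v : V) : Prop :=
  Relation.ReflTransGen G.Adj u v

/-- `G.vle v u` means `v ⪯ u` (i.e. `v` is a descendant of `u`). -/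
def vle (G : MGraph V E) (v u : V) : Prop := G.Reach u v

/-- `G.vlt v u` means `v ≺ u` (i.e. `v` is strictly below `u`). -/
def vlt (G : MGraph V E) (v u : V) : Prop := G.Reach u v ∧ v ≠ u

/-- indegree of a vertex -/
noncomputable def inDeg (G : MGraph V E) (v : V) : ℕ :=
  Nat.card {e : E // G.head e = v}

/-- outdegree of a vertex -/
noncomputable def outDeg (G : MGraph V E) (v : V) : ℕ :=
  Nat.card {e : E // G.tail e = v}

/-- `G` is a DAG. -/
def Acyclic (G : MGraph V E) : Prop :=
  ∀ v : V, ¬ Relation.TransGen G.Adj v v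

/-- `G` has no multi-arcs. -/
def MultiArcFree (G : MGraph V E) : Prop :=
  ∀ e f : E, G.tail e = G.tail f → G.head e = G.head f → e = f

/-- A point of `V ∪ E`, where an arc is represented by its head
    (used for extending `Q`-sets to arcs). -/
def hpt (G : MGraph V E) : V ⊕ E → V
  | Sum.inl v => v
  | Sum.inr e => G.head e

/-- A point of `V ∪ E`, where an arc is represented by its tail
    (used for extending `lca` to arcs). -/
def tpt (G : MGraph V E) : V ⊕ E → V
  | Sum.inl v => v
  | Sum.inr e => G.tail e

/-- The strict order `≺` on `V ∪ E`:
    `x ≺ y` for vertices means `x ⪯ y` and `x ≠ y`;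
    a vertex `x ≺` an arc `e = (u,v)` iff `x ⪯ v`;
    an arc `e = (u,v) ≺` a vertex `x` iff `u ⪯ x`;
    for arcs `e = (u,v)` and `f = (a,b)`: `e ≺ f` iff `v ≺ u ⪯ b ≺ a`. -/
def slt (G : MGraph V E) : V ⊕ E → V ⊕ E → Prop
  | Sum.inl x, Sum.inl y => G.vlt x y
  | Sum.inl x, Sum.inr e => G.vle x (G.head e)
  | Sum.inr e, Sum.inl x => G.vle (G.tail e) x
  | Sum.inr e, Sum.inr f =>
      G.vlt (G.head e) (G.tail e) ∧ G.vle (G.tail e) (G.head f) ∧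
        G.vlt (G.head f) (G.tail f)

/-- The (non-strict) order `⪯` on `V ∪ E`. -/
def sle (G : MGraph V E) (a b : V ⊕ E) : Prop := a = b ∨ G.slt a b

/-- `Q_N(x,y)`: the set of vertices `z` admitting directed paths from `z` to `x`
    and from `z` to `y` which are separated by `z`, i.e. start with different
    children of `z`. -/
def QSet (G : MGraph V E) (x y : V) : Set V :=
  {z | ∃ c₁ c₂ : V, c₁ ≠ c₂ ∧ G.Adj z c₁ ∧ G.Adj z c₂ ∧ G.Reach c₁ x ∧ G.Reach c₂ y}

/-- `l` is the least common ancestor of the set `A`: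
    a `⪯`-minimal common ancestor of all of `A`. -/
def IsLca (G : MGraph V E) (A : Set V) (l : V) : Prop :=
  (∀ a ∈ A, G.Reach l a) ∧ ∀ l' : V, (∀ a ∈ A, G.Reach l' a) → G.Reach l' l

/-- A directed path, given as its (nonempty, repetition-free) list of vertices. -/
def IsDiPath (G : MGraph V E) (p : List V) : Prop :=
  p ≠ [] ∧ p.Chain' G.Adj ∧ p.Nodup

end MGraph

/-- Event labels for inner vertices of gene trees: speciation or duplication. -/
inductive Event : Type
  | spec : Event
  | dupl : Event
  deriving DecidableEq

variable {V E W F D U S : Type}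

/-- `(G, lv, ρ)` is a (rooted phylogenetic) network with leaf set `lv` and root `ρ`:
    (N1) the root has indegree 0 and outdegree 1 and its unique child has
    indegree 1 and outdegree at least 2;
    (N2) the leaves are exactly the vertices of outdegree 0 and indegree 1;
    (N3) every other non-leaf vertex is a tree vertex (indegree 1, outdegree > 1)
    or a hybrid vertex (indegree > 1, outdegree 1);
    moreover the leaf set has at least two elements and everything is finite. -/
structure IsNetwork (G : MGraph V E) (lv : Set V) (ρ : V) : Prop where
  finV : Finite V
  finE : Finite E
  acyclic : G.Acyclic
  root_in : G.inDeg ρ = 0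
  root_out : G.outDeg ρ = 1
  root_child : ∀ c : V, G.Adj ρ c → G.inDeg c = 1 ∧ 2 ≤ G.outDeg c
  leaf_iff : ∀ v : V, v ∈ lv ↔ (G.outDeg v = 0 ∧ G.inDeg v = 1)
  inner_deg : ∀ v : V, v ∉ lv → v ≠ ρ →
      (G.inDeg v = 1 ∧ 2 ≤ G.outDeg v) ∨ (2 ≤ G.inDeg v ∧ G.outDeg v = 1)
  two_leaves : ∃ a b : V, a ∈ lv ∧ b ∈ lv ∧ a ≠ b

/-- no hybrid vertices -/
def NoHybrid (G : MGraph V E) : Prop := ∀ v : V, G.inDeg v ≤ 1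

/-- A (rooted) phylogenetic tree: a multi-arc free network without hybrid vertices. -/
def IsPhyloTree (G : MGraph V E) (lv : Set V) (ρ : V) : Prop :=
  IsNetwork G lv ρ ∧ G.MultiArcFree ∧ NoHybrid G

/-- A network (or tree) "on 𝕊": its leaves are in bijection with the species set `S`
    via the labeling `sp`. -/
structure IsLeafLabeling (G : MGraph V E) (lv : Set V) (sp : S → V) : Prop where
  inj : Function.Injective sp
  mem : ∀ s : S, sp s ∈ lv
  surj : ∀ v ∈ lv, ∃ s : S, sp s = v

/-- `(G, lv, ρ, σ)` is the underlying structure of an event-labeled gene tree on the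
    gene set `lv`: a reduced tree (root of indegree 0 and outdegree ≥ 2, all other
    inner vertices of indegree 1 and outdegree ≥ 2) together with a surjective
    gene-species map `σ` whose image has more than one element. -/
structure IsGeneTree (G : MGraph V E) (lv : Set V) (ρ : V) (σ : V → S) : Prop where
  finV : Finite V
  finE : Finite E
  acyclic : G.Acyclic
  multiarc_free : G.MultiArcFree
  root_in : G.inDeg ρ = 0
  root_out : 2 ≤ G.outDeg ρ
  leaf_iff : ∀ v : V, v ∈ lv ↔ (G.outDeg v = 0 ∧ G.inDeg v = 1)
  inner_deg : ∀ v : V, v ∉ lv → v ≠ ρ → G.inDeg v = 1 ∧ 2 ≤ G.outDeg v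
  sigma_surj : ∀ s : S, ∃ g ∈ lv, σ g = s
  sigma_nontriv : ∃ g g' : V, g ∈ lv ∧ g' ∈ lv ∧ σ g ≠ σ g'

/-- `L_T(x)`: the set of leaves below or equal to `x`. -/
def leavesBelow (G : MGraph V E) (lv : Set V) (x : V) : Set V :=
  {g | g ∈ lv ∧ G.Reach x g}

/-- A TreeNet-reconciliation map `μ` from the event-labeled gene tree `(T;t,σ)`
    to the network `N` (with species labeling `sp`):
    (R1) leaves are mapped to the species containing them;
    (R2.i) a speciation vertex is mapped to a vertex of `N` separating the images
    of two of its children (i.e. `μ x ∈ Q²`);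
    (R2.ii) a duplication vertex is mapped to an arc of `N`;
    (R3) ancestor relations are preserved (strictly, unless both events are
    duplications). -/
structure IsTreeNetRecon (T : MGraph V E) (lvT : Set V) (t : V → Event) (σ : V → S)
    (N : MGraph W F) (sp : S → W) (μ : V → W ⊕ F) : Prop where
  R1 : ∀ x ∈ lvT, μ x = Sum.inl (sp (σ x))
  R2i : ∀ x : V, x ∉ lvT → t x = Event.spec →
      ∃ w : W, μ x = Sum.inl w ∧ ∃ c₁ c₂ : V, T.Adj x c₁ ∧ T.Adj x c₂ ∧
        w ∈ N.QSet (N.hpt (μ c₁)) (N.hpt (μ c₂))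
  R2ii : ∀ x : V, x ∉ lvT → t x = Event.dupl → ∃ e : F, μ x = Sum.inr e
  R3d : ∀ x y : V, T.vlt x y → x ∉ lvT → y ∉ lvT →
      t x = Event.dupl → t y = Event.dupl → N.sle (μ x) (μ y)
  R3s : ∀ x y : V, T.vlt x y →
      ¬ (x ∉ lvT ∧ y ∉ lvT ∧ t x = Event.dupl ∧ t y = Event.dupl) →
      N.slt (μ x) (μ y)

lemma parent_unique {W F : Type} {G : MGraph W F} (hF : Finite F) (hnh : NoHybrid G)
    {u u' c : W} (h1 : G.Adj u c) (h2 : G.Adj u' c) : u = u' := by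
  obtain ⟨e, he, he'⟩ := h1
  obtain ⟨f, hf, hf'⟩ := h2
  have hcard : Nat.card {e : F // G.head e = c} ≤ 1 := hnh c
  haveI : Finite {e : F // G.head e = c} := Subtype.finite
  haveI : Nonempty {e : F // G.head e = c} := ⟨⟨e, he'⟩⟩
  have hpos : 0 < Nat.card {e : F // G.head e = c} := Nat.card_pos
  have h1' : Nat.card {e : F // G.head e = c} = 1 := le_antisymm hcard hpos
  obtain ⟨z, hz⟩ := Nat.card_eq_one_iff_exists.mp h1'
  have : (⟨e, he'⟩ : {e : F // G.head e = c}) = ⟨f, hf'⟩ := by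
    rw [hz ⟨e, he'⟩, hz ⟨f, hf'⟩]
  have : e = f := congrArg Subtype.val this
  rw [← he, ← hf, this]

/-- In a graph without hybrid vertices, ancestors of a common vertex are comparable. -/
lemma anc_comp {W F : Type} {G : MGraph W F} (hF : Finite F) (hnh : NoHybrid G)
    {u v : W} (h : G.Reach u v) : ∀ {u' : W}, G.Reach u' v → G.Reach u u' ∨ G.Reach u' u := by
  induction h using Relation.ReflTransGen.head_induction_on with
  | refl => intro u' h'; exact Or.inr h'
  | head hadj _ ih =>
    rename_i a c _
    intro u' h'
    rcases ih h' with hcu' | hu'c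
    · exact Or.inl (Relation.ReflTransGen.head hadj hcu')
    · rcases hu'c.cases_tail with rfl | ⟨p, hp, hpc⟩
      · exact Or.inl (Relation.ReflTransGen.single hadj)
      · have hpa : p = a := parent_unique hF hnh hpc hadj
        exact Or.inr (hpa ▸ hp)

/-- In an acyclic graph without hybrid vertices, two distinct children of a vertex
    cannot both reach a common vertex. -/
lemma distinct_children_no_common {W F : Type} {G : MGraph W F} (hF : Finite F)
    (hac : G.Acyclic) (hnh : NoHybrid G) {q c d v : W}
    (hc : G.Adj q c) (hd : G.Adj q d) (hne : c ≠ d)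
    (h1 : G.Reach c v) (h2 : G.Reach d v) : False := by
  rcases anc_comp hF hnh h1 h2 with h | h
  · rcases h.cases_tail with rfl | ⟨p, hp, hpd⟩
    · exact hne rfl
    · have : p = q := parent_unique hF hnh hpd hd
      exact hac q (Relation.TransGen.head' hc (this ▸ hp))
  · rcases h.cases_tail with rfl | ⟨p, hp, hpc⟩
    · exact hne rfl
    · have : p = q := parent_unique hF hnh hpc hc
      exact hac q (Relation.TransGen.head' hd (this ▸ hp))

/-- If `p ≺ w` in the order on `V ∪ E`, then `w` reaches the head-point of `p`. -/
lemma reach_hpt_of_slt {W F : Type} {G : MGraph W F} {p : W ⊕ F} {w : W}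
    (h : G.slt p (Sum.inl w)) : G.Reach w (G.hpt p) := by
  cases p with
  | inl v => exact h.1
  | inr e => exact Relation.ReflTransGen.tail h ⟨e, rfl, rfl⟩

/-- If `μ` is a TreeNet-reconciliation map from the event-labeled
    gene tree `(T;t,σ)` to a species tree `S`, and `x` is a speciation vertex with
    children `x₁,…,x_k` (`k ≥ 2`, automatic for inner vertices), then
    `μ(x) ⪰_S q` for every `q ∈ Q²_S(μ(x₁),…,μ(x_k))`, i.e. `μ(x)` is the
    `⪰_S`-maximal element of this set. -/
theorem recon_speciation_max_in_Q2 {V E W F S : Type}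
    (T : MGraph V E) (lvT : Set V) (ρT : V) (t : V → Event) (σ : V → S)
    (hT : IsGeneTree T lvT ρT σ)
    (Sg : MGraph W F) (lvS : Set W) (ρS : W) (sp : S → W)
    (hS : IsPhyloTree Sg lvS ρS) (hsp : IsLeafLabeling Sg lvS sp)
    (μ : V → W ⊕ F) (hμ : IsTreeNetRecon T lvT t σ Sg sp μ)
    (x : V) (hx : x ∉ lvT) (hxs : t x = Event.spec) :
    ∀ (q : W) (c₁ c₂ : V), T.Adj x c₁ → T.Adj x c₂ →
      q ∈ Sg.QSet (Sg.hpt (μ c₁)) (Sg.hpt (μ c₂)) →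
      Sg.sle (Sum.inl q) (μ x) := by
  intro q c₁ c₂ hc1 hc2 hq
  obtain ⟨hSN, hMAF, hNH⟩ := hS
  have hF : Finite F := hSN.finE
  obtain ⟨w, hw, -⟩ := hμ.R2i x hx hxs
  rw [hw]
  -- children are strictly below x in T
  have vlt_child : ∀ c : V, T.Adj x c → T.vlt c x := by
    intro c hc
    refine ⟨Relation.ReflTransGen.single hc, ?_⟩
    rintro rfl
    exact hT.acyclic c (Relation.TransGen.single hc)
  have hnot : ¬ (c₁ ∉ lvT ∧ x ∉ lvT ∧ t c₁ = Event.dupl ∧ t x = Event.dupl) := by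
    rintro ⟨-, -, -, h⟩; rw [hxs] at h; exact Event.noConfusion h
  have hnot2 : ¬ (c₂ ∉ lvT ∧ x ∉ lvT ∧ t c₂ = Event.dupl ∧ t x = Event.dupl) := by
    rintro ⟨-, -, -, h⟩; rw [hxs] at h; exact Event.noConfusion h
  have hs1 : Sg.slt (μ c₁) (Sum.inl w) := hw ▸ hμ.R3s c₁ x (vlt_child c₁ hc1) hnot
  have hs2 : Sg.slt (μ c₂) (Sum.inl w) := hw ▸ hμ.R3s c₂ x (vlt_child c₂ hc2) hnot2
  have hwa : Sg.Reach w (Sg.hpt (μ c₁)) := reach_hpt_of_slt hs1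
  have hwb : Sg.Reach w (Sg.hpt (μ c₂)) := reach_hpt_of_slt hs2
  obtain ⟨d₁, d₂, hdne, hqd₁, hqd₂, hra, hrb⟩ := hq
  have hqa : Sg.Reach q (Sg.hpt (μ c₁)) := Relation.ReflTransGen.head hqd₁ hra
  by_cases hqw : q = w
  · exact Or.inl (by rw [hqw])
  rcases anc_comp hF hNH hqa hwa with hqw' | hwq
  · -- q strictly above w : contradiction
    exfalso
    rcases hqw'.cases_head with rfl | ⟨c, hqc, hcw⟩
    · exact hqw rfl
    · have hca : Sg.Reach c (Sg.hpt (μ c₁)) := hcw.trans hwa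
      have hcb : Sg.Reach c (Sg.hpt (μ c₂)) := hcw.trans hwb
      by_cases hcd : c = d₁
      · subst hcd
        exact distinct_children_no_common hF hSN.acyclic hNH hqc hqd₂ hdne hcb hrb
      · exact distinct_children_no_common hF hSN.acyclic hNH hqc hqd₁ hcd hca hra
  · exact Or.inr ⟨hwq, hqw⟩

end Phylo
end

section
/- Let (T=(V,E);t,σ) be an event-labeled gene tree such that there exists a relaxed tree reconciliation map μ from (T;t,σ) to some species tree S, and let x∈V with t(x)=𝔰. Then there exist two distinct children x_i and x_j of x in T such that (i) μ(x)=lca_S(μ(x_i),μ(x_j)) and (ii) μ(x_i) and μ(x_j) are incomparable in S. Furthermore, (iii) for every child x_i of x in T there is a child x_j of x in T such that σ(L_T(x_i)) ∩ σ(L_T(x_j)) = ∅. -/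
namespace Phylo

variable {V E W F D U S : Type}

/-- A relaxed tree reconciliation map from `(T;t,σ)` to the species tree `S`:
    like a tree reconciliation map but (R2.iii) is not required.
    (R2.i*) requires a speciation vertex to be mapped to
    `lca_S(σ(L_T(x)))`. -/
structure IsRelaxedRecon (T : MGraph V E) (lvT : Set V) (t : V → Event) (σ : V → S)
    (N : MGraph W F) (sp : S → W) (μ : V → W ⊕ F) : Prop where
  R1 : ∀ x ∈ lvT, μ x = Sum.inl (sp (σ x))
  R2istar : ∀ x : V, x ∉ lvT → t x = Event.spec →
      ∃ w : W, μ x = Sum.inl w ∧ N.IsLca (sp '' (σ '' leavesBelow T lvT x)) w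
  R2ii : ∀ x : V, x ∉ lvT → t x = Event.dupl → ∃ e : F, μ x = Sum.inr e
  R3d : ∀ x y : V, T.vlt x y → x ∉ lvT → y ∉ lvT →
      t x = Event.dupl → t y = Event.dupl → N.sle (μ x) (μ y)
  R3s : ∀ x y : V, T.vlt x y →
      ¬ (x ∉ lvT ∧ y ∉ lvT ∧ t x = Event.dupl ∧ t y = Event.dupl) →
      N.slt (μ x) (μ y)


section AuxLemmas

lemma arc_adj' {V E : Type} (G : MGraph V E) (e : E) :
    G.Adj (G.tail e) (G.head e) := ⟨e, rfl, rfl⟩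

lemma reach_antisymm {V E : Type} (G : MGraph V E) (hG : G.Acyclic) {u v : V}
    (h1 : G.Reach u v) (h2 : G.Reach v u) : u = v := by
  by_contra hne
  rcases Relation.reflTransGen_iff_eq_or_transGen.mp h1 with rfl | ht
  · exact hne rfl
  · exact hG u (ht.trans_left h2)

lemma unique_parent {V E : Type} (G : MGraph V E) (hfin : Finite E) (hnh : NoHybrid G)
    {p q v : V} (hp : G.Adj p v) (hq : G.Adj q v) : p = q := by
  obtain ⟨e, he, he'⟩ := hp
  obtain ⟨f, hf, hf'⟩ := hq
  have hpos : 0 < Nat.card {e : E // G.head e = v} :=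
    Nat.card_pos_iff.mpr ⟨⟨⟨e, he'⟩⟩, Subtype.finite⟩
  have hone : Nat.card {e : E // G.head e = v} = 1 := le_antisymm (hnh v) hpos
  obtain ⟨y, hy⟩ := Nat.card_eq_one_iff_exists.mp hone
  have : (⟨e, he'⟩ : {e : E // G.head e = v}) = ⟨f, hf'⟩ := (hy _).trans (hy _).symm
  have hef : e = f := congrArg Subtype.val this
  rw [← he, ← hf, hef]

lemma anc_comparable {V E : Type} (G : MGraph V E) (hfin : Finite E) (hnh : NoHybrid G)
    {a z : V} (ha : G.Reach a z) : ∀ b, G.Reach b z → G.Reach a b ∨ G.Reach b a := by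
  induction ha with
  | refl => exact fun b hb => Or.inr hb
  | tail hm hadj ih =>
    intro b hb
    rcases Relation.ReflTransGen.cases_tail hb with rfl | ⟨c, hbc, hcz⟩
    · exact Or.inl (hm.tail hadj)
    · rw [unique_parent G hfin hnh hcz hadj] at hbc
      exact ih b hbc

lemma child_disjoint {V E : Type} (G : MGraph V E) (hG : G.Acyclic) (hfin : Finite E)
    (hnh : NoHybrid G) {w u₁ u₂ z : V} (h1 : G.Adj w u₁) (h2 : G.Adj w u₂)
    (hne : u₁ ≠ u₂) (r1 : G.Reach u₁ z) (r2 : G.Reach u₂ z) : False := by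
  have key : ∀ a b : V, G.Adj w a → G.Adj w b → G.Reach a b → a = b := by
    intro a b hwa hwb hab
    by_contra hab'
    rcases Relation.ReflTransGen.cases_tail hab with rfl | ⟨p, hap, hpb⟩
    · exact hab' rfl
    · rw [unique_parent G hfin hnh hpb hwb] at hap
      exact hG w (Relation.TransGen.head' hwa hap)
  rcases anc_comparable G hfin hnh r1 u₂ r2 with h | h
  · exact hne (key _ _ h1 h2 h)
  · exact hne ((key _ _ h2 h1 h).symm)

lemma below_strict_anc {V E : Type} (G : MGraph V E) (hG : G.Acyclic) (hfin : Finite E)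
    (hnh : NoHybrid G) {w u z l : V} (hwu : G.Adj w u) (huz : G.Reach u z)
    (hlz : G.Reach l z) (hnl : ¬ G.Reach l w) : G.Reach u l := by
  rcases anc_comparable G hfin hnh hlz u huz with h | h
  · rcases Relation.ReflTransGen.cases_tail h with rfl | ⟨p, hlp, hpu⟩
    · exact Relation.ReflTransGen.refl
    · rw [unique_parent G hfin hnh hpu hwu] at hlp
      exact absurd hlp hnl
  · exact h

lemma sle_reach_hpt {V E : Type} (G : MGraph V E) {p q : V ⊕ E} (h : G.sle p q) :
    G.Reach (G.hpt q) (G.hpt p) := by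
  rcases h with rfl | h
  · exact Relation.ReflTransGen.refl
  · cases p with
    | inl a =>
      cases q with
      | inl b => exact h.1
      | inr f => exact h
    | inr e =>
      cases q with
      | inl b => exact Relation.ReflTransGen.tail h (arc_adj' G e)
      | inr f => exact Relation.ReflTransGen.tail h.2.1 (arc_adj' G e)

lemma geneTree_reach_leaf {V E S : Type} (T : MGraph V E) (lvT : Set V) (ρT : V)
    (σ : V → S) (hT : IsGeneTree T lvT ρT σ) (v : V) : ∃ g ∈ lvT, T.Reach v g := by
  haveI := hT.finV
  haveI := hT.finE
  haveI : IsTrans V (fun a b => Relation.TransGen T.Adj b a) :=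
    ⟨fun a b c h1 h2 => h2.trans h1⟩
  haveI : IsIrrefl V (fun a b => Relation.TransGen T.Adj b a) :=
    ⟨fun a h => hT.acyclic a h⟩
  refine (Finite.wellFounded_of_trans_of_irrefl
    (fun a b => Relation.TransGen T.Adj b a)).induction
    (C := fun v => ∃ g ∈ lvT, T.Reach v g) v ?_
  intro v ih
  by_cases hv : T.outDeg v = 0
  · refine ⟨v, ?_, Relation.ReflTransGen.refl⟩
    by_contra hvl
    have hvρ : v ≠ ρT := by
      rintro rfl
      have := hT.root_out
      omega
    have := (hT.inner_deg v hvl hvρ).2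
    omega
  · have hne : Nonempty {e : E // T.tail e = v} := by
      by_contra hne
      rw [not_nonempty_iff] at hne
      exact hv Nat.card_of_isEmpty
    obtain ⟨e, he⟩ := hne
    have hadj : T.Adj v (T.head e) := ⟨e, he, rfl⟩
    obtain ⟨g, hg, hr⟩ := ih (T.head e) (Relation.TransGen.single hadj)
    exact ⟨g, hg, Relation.ReflTransGen.head hadj hr⟩

end AuxLemmas

/-- If `μ` is a relaxed tree reconciliation map from `(T;t,σ)` to a
    species tree `S` and `x` is a speciation vertex, then there are two distinct
    children `x_i, x_j` of `x` with (i) `μ(x) = lca_S(μ(x_i), μ(x_j))` and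
    (ii) `μ(x_i)` and `μ(x_j)` incomparable in `S`; furthermore (iii) every child
    `x_i` admits a child `x_j` with `σ(L_T(x_i)) ∩ σ(L_T(x_j)) = ∅`. -/
theorem relaxed_recon_speciation_children {V E W F S : Type}
    (T : MGraph V E) (lvT : Set V) (ρT : V) (t : V → Event) (σ : V → S)
    (hT : IsGeneTree T lvT ρT σ)
    (Sg : MGraph W F) (lvS : Set W) (ρS : W) (sp : S → W)
    (hS : IsPhyloTree Sg lvS ρS) (hsp : IsLeafLabeling Sg lvS sp)
    (μ : V → W ⊕ F) (hμ : IsRelaxedRecon T lvT t σ Sg sp μ)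
    (x : V) (hx : x ∉ lvT) (hxs : t x = Event.spec) :
    (∃ xi xj : V, T.Adj x xi ∧ T.Adj x xj ∧ xi ≠ xj ∧
        (∃ w : W, μ x = Sum.inl w ∧ Sg.IsLca {Sg.tpt (μ xi), Sg.tpt (μ xj)} w) ∧
        ¬ Sg.sle (μ xi) (μ xj) ∧ ¬ Sg.sle (μ xj) (μ xi)) ∧
    (∀ xi : V, T.Adj x xi → ∃ xj : V, T.Adj x xj ∧
        (σ '' leavesBelow T lvT xi) ∩ (σ '' leavesBelow T lvT xj) = ∅) := by
  classical
  obtain ⟨hNet, hMAF, hNH⟩ := hS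
  have hfinE : Finite F := hNet.finE
  have hacy : Sg.Acyclic := hNet.acyclic
  obtain ⟨w, hμx, hlcaA⟩ := hμ.R2istar x hx hxs
  have hchild_ne : ∀ c : V, T.Adj x c → c ≠ x := by
    rintro c hc rfl
    exact hT.acyclic c (Relation.TransGen.single hc)
  have hvlt : ∀ c, T.Adj x c → T.vlt c x :=
    fun c hc => ⟨Relation.ReflTransGen.single hc, hchild_ne c hc⟩
  have hnotdup : ∀ z : V, ¬(z ∉ lvT ∧ x ∉ lvT ∧ t z = Event.dupl ∧ t x = Event.dupl) := by
    rintro z ⟨_, _, _, hd⟩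
    rw [hxs] at hd
    exact Event.noConfusion hd
  have Hc : ∀ c, T.Adj x c →
      Sg.Reach w (Sg.hpt (μ c)) ∧ Sg.hpt (μ c) ≠ w ∧
      Sg.Reach (Sg.tpt (μ c)) (Sg.hpt (μ c)) ∧ Sg.Reach w (Sg.tpt (μ c)) := by
    intro c hc
    have hslt := hμ.R3s c x (hvlt c hc) (hnotdup c)
    rw [hμx] at hslt
    rcases hmc : μ c with v | e <;> rw [hmc] at hslt
    · obtain ⟨hr, hne⟩ := hslt
      exact ⟨hr, hne, Relation.ReflTransGen.refl, hr⟩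
    · have hadj : Sg.Adj (Sg.tail e) (Sg.head e) := ⟨e, rfl, rfl⟩
      have hslt' : Sg.Reach w (Sg.tail e) := hslt
      refine ⟨hslt'.tail hadj, ?_, Relation.ReflTransGen.single hadj, hslt'⟩
      intro hw
      have hadj' : Sg.Adj (Sg.tail e) w := by rw [← hw]; exact hadj
      exact hacy w (Relation.TransGen.tail' hslt' hadj')
  have Hleaf : ∀ c, T.Adj x c → ∀ g ∈ leavesBelow T lvT c,
      Sg.Reach (Sg.hpt (μ c)) (sp (σ g)) := by
    rintro c hc g ⟨hg, hrg⟩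
    by_cases hgc : g = c
    · subst hgc
      rw [hμ.R1 g hg]
      exact Relation.ReflTransGen.refl
    · have hslt := hμ.R3s g c ⟨hrg, hgc⟩ (by rintro ⟨hgl, _⟩; exact hgl hg)
      rw [hμ.R1 g hg] at hslt
      rcases hmc : μ c with v | e <;> rw [hmc] at hslt
      · exact hslt.1
      · exact hslt
  have Hsplit : ∀ g ∈ leavesBelow T lvT x, ∃ c, T.Adj x c ∧ g ∈ leavesBelow T lvT c := by
    rintro g ⟨hg, hrg⟩
    rcases Relation.ReflTransGen.cases_head hrg with rfl | ⟨c, hxc, hcg⟩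
    · exact absurd hg hx
    · exact ⟨c, hxc, hg, hcg⟩
  set A := sp '' (σ '' leavesBelow T lvT x) with hA
  have HcA : ∀ a ∈ A, ∃ c, T.Adj x c ∧ Sg.Reach (Sg.hpt (μ c)) a := by
    rintro a ⟨s, ⟨g, hgmem, rfl⟩, rfl⟩
    obtain ⟨c, hxc, hgc⟩ := Hsplit g hgmem
    exact ⟨c, hxc, Hleaf c hxc g hgc⟩
  have HAlt : ∀ a ∈ A, Sg.Reach w a ∧ a ≠ w := by
    intro a ha
    obtain ⟨c, hxc, hra⟩ := HcA a ha
    obtain ⟨hwh, hhw, -, -⟩ := Hc c hxc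
    refine ⟨hwh.trans hra, ?_⟩
    rintro rfl
    exact hhw (reach_antisymm Sg hacy hra hwh)
  have Hfirst : ∀ z : W, Sg.Reach w z → z ≠ w → ∃ u, Sg.Adj w u ∧ Sg.Reach u z := by
    intro z hz hne
    rcases Relation.ReflTransGen.cases_head hz with h | h
    · exact absurd h.symm hne
    · exact h
  have Hnotall : ∀ u : W, Sg.Adj w u → ¬ (∀ a ∈ A, Sg.Reach u a) := by
    intro u hu hall
    have hr := hlcaA.2 u hall
    exact hacy w (Relation.TransGen.head' hu hr)
  obtain ⟨g₀, hg₀, hrg₀⟩ := geneTree_reach_leaf T lvT ρT σ hT x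
  have ha₀ : sp (σ g₀) ∈ A := ⟨σ g₀, ⟨g₀, ⟨hg₀, hrg₀⟩, rfl⟩, rfl⟩
  obtain ⟨hwa₀, ha₀ne⟩ := HAlt _ ha₀
  obtain ⟨u₁, hwu₁, hu₁a₀⟩ := Hfirst _ hwa₀ ha₀ne
  have hnotall₁ := Hnotall u₁ hwu₁
  push_neg at hnotall₁
  obtain ⟨a', ha', hna'⟩ := hnotall₁
  obtain ⟨hwa', ha'ne⟩ := HAlt _ ha'
  obtain ⟨u₂, hwu₂, hu₂a'⟩ := Hfirst _ hwa' ha'ne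
  have hu12 : u₁ ≠ u₂ := by
    rintro rfl
    exact hna' hu₂a'
  obtain ⟨c₁, hxc₁, hr₁⟩ := HcA _ ha₀
  obtain ⟨c₂, hxc₂, hr₂⟩ := HcA _ ha'
  have Hhu : ∀ c, T.Adj x c → ∀ a, Sg.Reach (Sg.hpt (μ c)) a → ∀ u, Sg.Adj w u →
      Sg.Reach u a → Sg.Reach u (Sg.hpt (μ c)) := by
    intro c hc a hra u hu hua
    obtain ⟨hwh, hhw, -, -⟩ := Hc c hc
    obtain ⟨uc, hwuc, huch⟩ := Hfirst _ hwh hhw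
    have huc : uc = u := by
      by_contra hne
      exact child_disjoint Sg hacy hfinE hNH hwuc hu hne (huch.trans hra) hua
    rwa [← huc]
  have h1u : Sg.Reach u₁ (Sg.hpt (μ c₁)) := Hhu c₁ hxc₁ _ hr₁ u₁ hwu₁ hu₁a₀
  have h2u : Sg.Reach u₂ (Sg.hpt (μ c₂)) := Hhu c₂ hxc₂ _ hr₂ u₂ hwu₂ hu₂a'
  have hc12 : c₁ ≠ c₂ := by
    rintro rfl
    exact child_disjoint Sg hacy hfinE hNH hwu₁ hwu₂ hu12 h1u h2u
  constructor
  · refine ⟨c₁, c₂, hxc₁, hxc₂, hc12, ⟨w, hμx, ?_, ?_⟩, ?_, ?_⟩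
    · rintro a ha
      simp only [Set.mem_insert_iff, Set.mem_singleton_iff] at ha
      rcases ha with rfl | rfl
      · exact (Hc c₁ hxc₁).2.2.2
      · exact (Hc c₂ hxc₂).2.2.2
    · intro l' hl'
      have hl1 : Sg.Reach l' (Sg.tpt (μ c₁)) := hl' _ (Set.mem_insert _ _)
      have hl2 : Sg.Reach l' (Sg.tpt (μ c₂)) :=
        hl' _ (Set.mem_insert_of_mem _ rfl)
      have hlh1 := hl1.trans (Hc c₁ hxc₁).2.2.1
      have hlh2 := hl2.trans (Hc c₂ hxc₂).2.2.1
      rcases anc_comparable Sg hfinE hNH hlh1 w (Hc c₁ hxc₁).1 with h | h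
      · exact h
      · by_cases hlw : l' = w
        · subst hlw
          exact Relation.ReflTransGen.refl
        · have hnl : ¬ Sg.Reach l' w := fun hr => hlw (reach_antisymm Sg hacy hr h)
          have hul : Sg.Reach u₁ l' :=
            below_strict_anc Sg hacy hfinE hNH hwu₁ h1u hlh1 hnl
          exact (child_disjoint Sg hacy hfinE hNH hwu₁ hwu₂ hu12
            (hul.trans hlh2) h2u).elim
    · intro h
      have hr := sle_reach_hpt Sg h
      exact child_disjoint Sg hacy hfinE hNH hwu₁ hwu₂ hu12 h1u (h2u.trans hr)
    · intro h
      have hr := sle_reach_hpt Sg h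
      exact child_disjoint Sg hacy hfinE hNH hwu₁ hwu₂ hu12 (h1u.trans hr) h2u
  · intro c hc
    obtain ⟨u, hwu, huh⟩ := Hfirst _ (Hc c hc).1 (Hc c hc).2.1
    have hnotall := Hnotall u hwu
    push_neg at hnotall
    obtain ⟨a', ha', hna'⟩ := hnotall
    obtain ⟨c', hxc', hr'⟩ := HcA a' ha'
    refine ⟨c', hxc', ?_⟩
    rw [Set.eq_empty_iff_forall_notMem]
    rintro s ⟨⟨g₁, hg₁, rfl⟩, ⟨g₂, hg₂, hs⟩⟩
    obtain ⟨u', hwu', hu'h⟩ := Hfirst _ (Hc c' hxc').1 (Hc c' hxc').2.1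
    have hune : u ≠ u' := by
      rintro rfl
      exact hna' (hu'h.trans hr')
    have e₁ : Sg.Reach u (sp (σ g₁)) := huh.trans (Hleaf c hc g₁ hg₁)
    have e₂ : Sg.Reach u' (sp (σ g₁)) := by
      have := hu'h.trans (Hleaf c' hxc' g₂ hg₂)
      rwa [hs] at this
    exact child_disjoint Sg hacy hfinE hNH hwu hwu' hune e₁ e₂

end Phylo
end

section
/- Let (T=(V,E);t,σ) be an event-labeled gene tree, let S=(W,F) be a species tree, and let μ: V → W∪F be a map. Then μ is a relaxed tree reconciliation map from (T;t,σ) to S if and only if μ is a TreeNet-reconciliation map from (T;t,σ) to S. -/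
namespace Phylo

variable {V E W F D U S : Type}

section Aux

open Relation

variable {V E W F S : Type}

lemma MGraph.adj_of_arc (G : MGraph V E) (e : E) : G.Adj (G.tail e) (G.head e) :=
  ⟨e, rfl, rfl⟩

lemma acyclic_eq_of_reach {G : MGraph V E} (hac : G.Acyclic) {a b : V}
    (h1 : G.Reach a b) (h2 : G.Reach b a) : a = b := by
  by_contra hne
  rcases h1.cases_head with h | ⟨c, hc, hcb⟩
  · exact hne h
  · exact hac a (Relation.TransGen.head' hc (hcb.trans h2))

lemma acyclic_ne_of_adj {G : MGraph V E} (hac : G.Acyclic) {a b : V}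
    (h : G.Adj a b) : b ≠ a := by
  intro he; exact hac a (Relation.TransGen.single (he ▸ h))

/-- In a graph without hybrid vertices, parents are unique. -/
lemma unique_parent_s4 {G : MGraph V E} (hfin : Finite E) (hh : NoHybrid G)
    {u u' v : V} (h : G.Adj u v) (h' : G.Adj u' v) : u = u' := by
  obtain ⟨e, he1, he2⟩ := h
  obtain ⟨f, hf1, hf2⟩ := h'
  have hsub : Subsingleton {e : E // G.head e = v} := by
    have := hh v
    unfold MGraph.inDeg at this
    exact Finite.card_le_one_iff_subsingleton.mp this
  have : (⟨e, he2⟩ : {e : E // G.head e = v}) = ⟨f, hf2⟩ := hsub.allEq _ _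
  rw [← he1, ← hf1, Subtype.mk_eq_mk.mp this]

/-- Comparability of ancestors in a tree. -/
lemma reach_comparable {G : MGraph V E} (hfin : Finite E) (hac : G.Acyclic)
    (hh : NoHybrid G) {p q a : V} (hp : G.Reach p a) (hq : G.Reach q a) :
    G.Reach p q ∨ G.Reach q p := by
  induction hp using Relation.ReflTransGen.head_induction_on with
  | refl => exact Or.inr hq
  | head hadj _ ih =>
    rename_i p p' _
    rcases ih with h | h
    · exact Or.inl (Relation.ReflTransGen.head hadj h)
    · rcases h.cases_tail with he | ⟨u, hqu, hup'⟩
      · exact Or.inl (he ▸ Relation.ReflTransGen.single hadj)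
      · have : p = u := unique_parent_s4 hfin hh hadj hup'
        exact Or.inr (this ▸ hqu)

/-- Distinct children of a vertex in a tree are incomparable. -/
lemma child_eq_of_reach {G : MGraph V E} (hfin : Finite E) (hac : G.Acyclic)
    (hh : NoHybrid G) {w d d' : V} (hd : G.Adj w d) (hd' : G.Adj w d')
    (h : G.Reach d d') : d = d' := by
  rcases h.cases_tail with he | ⟨u, hdu, hud'⟩
  · exact he.symm
  · have : w = u := unique_parent_s4 hfin hh hd' hud'
    exact absurd (Relation.TransGen.head' hd (this ▸ hdu)) (hac w)

/-- Two children of `w` that are both ancestors of `a` coincide. -/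
lemma child_eq_of_common {G : MGraph V E} (hfin : Finite E) (hac : G.Acyclic)
    (hh : NoHybrid G) {w d d' a : V} (hd : G.Adj w d) (hd' : G.Adj w d')
    (ha : G.Reach d a) (ha' : G.Reach d' a) : d = d' := by
  rcases reach_comparable hfin hac hh ha ha' with h | h
  · exact child_eq_of_reach hfin hac hh hd hd' h
  · exact (child_eq_of_reach hfin hac hh hd' hd h).symm

/-- Every vertex of a gene tree has a leaf below or equal to it. -/
lemma exists_leaf_below {T : MGraph V E} {lvT : Set V} {ρT : V} {σ : V → S}
    (hT : IsGeneTree T lvT ρT σ) (x : V) : ∃ g ∈ lvT, T.Reach x g := by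
  haveI := hT.finV
  haveI := hT.finE
  have hwf : WellFounded (fun a b : V => Relation.TransGen T.Adj b a) := by
    haveI : IsTrans V (fun a b : V => Relation.TransGen T.Adj b a) :=
      ⟨fun a b c h1 h2 => h2.trans h1⟩
    haveI : IsIrrefl V (fun a b : V => Relation.TransGen T.Adj b a) :=
      ⟨fun a => hT.acyclic a⟩
    exact Finite.wellFounded_of_trans_of_irrefl _
  induction x using WellFounded.induction hwf with
  | _ y ih =>
    by_cases hy : y ∈ lvT
    · exact ⟨y, hy, Relation.ReflTransGen.refl⟩
    · have hout : T.outDeg y ≠ 0 := by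
        intro h0
        by_cases hρ : y = ρT
        · subst hρ; have := hT.root_out; omega
        · have := (hT.inner_deg y hy hρ).2; omega
      have : Nonempty {e : E // T.tail e = y} := by
        by_contra hne
        have : IsEmpty {e : E // T.tail e = y} := not_nonempty_iff.mp hne
        exact hout Nat.card_of_isEmpty
      obtain ⟨e, he⟩ := this
      have hadj : T.Adj y (T.head e) := ⟨e, he, rfl⟩
      obtain ⟨g, hg, hreach⟩ := ih (T.head e) (Relation.TransGen.single hadj)
      exact ⟨g, hg, Relation.ReflTransGen.head hadj hreach⟩

/-- If `m ≺ inl w` in the order on `V ∪ E`, then `hpt m` is strictly below `w`. -/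
lemma slt_inl_elim {Sg : MGraph W F} (hac : Sg.Acyclic) {m : W ⊕ F} {w : W}
    (h : Sg.slt m (Sum.inl w)) : Sg.Reach w (Sg.hpt m) ∧ Sg.hpt m ≠ w := by
  cases m with
  | inl v => exact ⟨h.1, h.2⟩
  | inr e =>
    have hwt : Sg.Reach w (Sg.tail e) := h
    have hadj : Sg.Adj (Sg.tail e) (Sg.head e) := Sg.adj_of_arc e
    refine ⟨hwt.tail hadj, ?_⟩
    intro heq
    apply hac w
    have h2 : Relation.TransGen Sg.Adj w (Sg.head e) := Relation.TransGen.tail' hwt hadj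
    rwa [show Sg.head e = w from heq] at h2

/-- If `inl a ≺ m`, then `hpt m` reaches `a`. -/
lemma slt_reach_hpt {Sg : MGraph W F} {m : W ⊕ F} {a : W}
    (h : Sg.slt (Sum.inl a) m) : Sg.Reach (Sg.hpt m) a := by
  cases m with
  | inl v => exact h.1
  | inr e => exact h

end Aux

/-- For an event-labeled gene tree `(T;t,σ)`, a species tree `S` and
    a map `μ : V → W ∪ F`, `μ` is a relaxed tree reconciliation map from `(T;t,σ)`
    to `S` iff it is a TreeNet-reconciliation map from `(T;t,σ)` to `S`. -/
theorem relaxed_iff_treenet {V E W F S : Type}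
    (T : MGraph V E) (lvT : Set V) (ρT : V) (t : V → Event) (σ : V → S)
    (hT : IsGeneTree T lvT ρT σ)
    (Sg : MGraph W F) (lvS : Set W) (ρS : W) (sp : S → W)
    (hS : IsPhyloTree Sg lvS ρS) (hsp : IsLeafLabeling Sg lvS sp)
    (μ : V → W ⊕ F) :
    IsRelaxedRecon T lvT t σ Sg sp μ ↔ IsTreeNetRecon T lvT t σ Sg sp μ :=  by
  classical
  obtain ⟨hSnet, hSmaf, hShyb⟩ := hS
  haveI hFfin : Finite F := hSnet.finE
  have hSac : Sg.Acyclic := hSnet.acyclic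
  -- leaves under a vertex are strictly below it
  have hvlt_leaf : ∀ x : V, x ∉ lvT → ∀ g ∈ leavesBelow T lvT x, T.vlt g x := by
    intro x hx g hg
    exact ⟨hg.2, fun h => hx (h ▸ hg.1)⟩
  -- R3s applies whenever the upper vertex is a speciation
  have hspec_ne : ∀ x : V, t x = Event.spec →
      ∀ y : V, ¬ (y ∉ lvT ∧ x ∉ lvT ∧ t y = Event.dupl ∧ t x = Event.dupl) := by
    intro x hts y ⟨_, _, _, h4⟩
    rw [hts] at h4; exact Event.noConfusion h4
  constructor
  · -- relaxed ⇒ treenet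
    intro h
    refine ⟨h.R1, ?_, h.R2ii, h.R3d, h.R3s⟩
    intro x hx hts
    obtain ⟨w, hw, hlca⟩ := h.R2istar x hx hts
    refine ⟨w, hw, ?_⟩
    -- image of anything strictly below x is strictly below w
    have hbelow : ∀ y : V, T.vlt y x → Sg.Reach w (Sg.hpt (μ y)) ∧ Sg.hpt (μ y) ≠ w := by
      intro y hy
      have := h.R3s y x hy (hspec_ne x hts y)
      rw [hw] at this
      exact slt_inl_elim hSac this
    -- image of an ancestor reaches the image of the leaf
    have hleafreach : ∀ c : V, ∀ g ∈ lvT, T.Reach c g →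
        Sg.Reach (Sg.hpt (μ c)) (sp (σ g)) := by
      intro c g hg hreach
      by_cases hcg : g = c
      · subst hcg
        rw [h.R1 g hg]
        exact Relation.ReflTransGen.refl
      · have := h.R3s g c ⟨hreach, hcg⟩ (fun hh => hh.1 hg)
        rw [h.R1 g hg] at this
        exact slt_reach_hpt this
    -- every image of a leaf below x is strictly below w
    have hA : ∀ g ∈ leavesBelow T lvT x,
        Sg.Reach w (sp (σ g)) ∧ sp (σ g) ≠ w := by
      intro g hg
      have := hbelow g (hvlt_leaf x hx g hg)
      rwa [h.R1 g hg.1] at this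
    -- pick a leaf below x
    obtain ⟨g₁, hg₁, hrg₁⟩ := exists_leaf_below hT x
    have hg₁m : g₁ ∈ leavesBelow T lvT x := ⟨hg₁, hrg₁⟩
    obtain ⟨hwa₁, hne₁⟩ := hA g₁ hg₁m
    obtain hd | ⟨d₁, hadj₁, hda₁⟩ := hwa₁.cases_head
    · exact absurd hd.symm hne₁
    -- not all leaves below x lie below d₁
    have : ¬ ∀ g ∈ leavesBelow T lvT x, Sg.Reach d₁ (sp (σ g)) := by
      intro hall
      have : Sg.Reach d₁ w := by
        apply hlca.2
        rintro a ⟨s, ⟨g, hg, rfl⟩, rfl⟩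
        exact hall g hg
      exact hSac w (Relation.TransGen.head' hadj₁ this)
    push_neg at this
    obtain ⟨g₂, hg₂m, hnd₁⟩ := this
    obtain ⟨hwa₂, hne₂⟩ := hA g₂ hg₂m
    obtain hd | ⟨d₂, hadj₂, hda₂⟩ := hwa₂.cases_head
    · exact absurd hd.symm hne₂
    have hdne : d₁ ≠ d₂ := by
      intro he; exact hnd₁ (he ▸ hda₂)
    -- find the children of x above g₁ and g₂
    have hchild : ∀ g ∈ leavesBelow T lvT x, ∀ d : W, Sg.Adj w d →
        Sg.Reach d (sp (σ g)) →
        ∃ c : V, T.Adj x c ∧ Sg.Reach d (Sg.hpt (μ c)) := by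
      intro g hg d hadj hda
      obtain hxg | ⟨c, hxc, hcg⟩ := hg.2.cases_head
      · exact absurd (hxg ▸ hg.1) hx
      have hvltc : T.vlt c x := ⟨Relation.ReflTransGen.single hxc,
        acyclic_ne_of_adj hT.acyclic hxc⟩
      obtain ⟨hwc, hcw⟩ := hbelow c hvltc
      obtain hd | ⟨d', hadj', hd'c⟩ := hwc.cases_head
      · exact absurd hd.symm hcw
      have hd'a : Sg.Reach d' (sp (σ g)) := hd'c.trans (hleafreach c g hg.1 hcg)
      have : d' = d := child_eq_of_common hFfin hSac hShyb hadj' hadj hd'a hda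
      exact ⟨c, hxc, this ▸ hd'c⟩
    obtain ⟨c₁, hxc₁, hd₁c₁⟩ := hchild g₁ hg₁m d₁ hadj₁ hda₁
    obtain ⟨c₂, hxc₂, hd₂c₂⟩ := hchild g₂ hg₂m d₂ hadj₂ hda₂
    exact ⟨c₁, c₂, hxc₁, hxc₂, d₁, d₂, hdne, hadj₁, hadj₂, hd₁c₁, hd₂c₂⟩
  · -- treenet ⇒ relaxed
    intro h
    refine ⟨h.R1, ?_, h.R2ii, h.R3d, h.R3s⟩
    intro x hx hts
    obtain ⟨w, hw, c₁, c₂, hxc₁, hxc₂, d₁, d₂, hdne, hadj₁, hadj₂, hd₁, hd₂⟩ :=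
      h.R2i x hx hts
    refine ⟨w, hw, ?_, ?_⟩
    · -- w reaches all leaf images
      rintro a ⟨s, ⟨g, hg, rfl⟩, rfl⟩
      have := h.R3s g x (hvlt_leaf x hx g hg) (hspec_ne x hts g)
      rw [hw, h.R1 g hg.1] at this
      exact this.1
    · -- minimality
      intro l' hl'
      -- find leaves below c₁ and c₂
      have hleaf : ∀ c : V, T.Adj x c → ∀ d : W, Sg.Adj w d →
          Sg.Reach d (Sg.hpt (μ c)) →
          ∃ a : W, a ∈ sp '' (σ '' leavesBelow T lvT x) ∧ Sg.Reach d a := by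
        intro c hxc d hadj hdc
        obtain ⟨g, hg, hcg⟩ := exists_leaf_below hT c
        have hgm : g ∈ leavesBelow T lvT x :=
          ⟨hg, Relation.ReflTransGen.head hxc hcg⟩
        have hhpt : Sg.Reach (Sg.hpt (μ c)) (sp (σ g)) := by
          by_cases hcg' : g = c
          · subst hcg'; rw [h.R1 g hg]; exact Relation.ReflTransGen.refl
          · have := h.R3s g c ⟨hcg, hcg'⟩ (fun hh => hh.1 hg)
            rw [h.R1 g hg] at this
            exact slt_reach_hpt this
        exact ⟨sp (σ g), ⟨σ g, ⟨g, hgm, rfl⟩, rfl⟩, hdc.trans hhpt⟩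
      obtain ⟨a₁, ha₁m, hd₁a₁⟩ := hleaf c₁ hxc₁ d₁ hadj₁ hd₁
      obtain ⟨a₂, ha₂m, hd₂a₂⟩ := hleaf c₂ hxc₂ d₂ hadj₂ hd₂
      have hwa₁ : Sg.Reach w a₁ := Relation.ReflTransGen.head hadj₁ hd₁a₁
      have hl'a₁ : Sg.Reach l' a₁ := hl' a₁ ha₁m
      rcases reach_comparable hFfin hSac hShyb hl'a₁ hwa₁ with hok | hwl'
      · exact hok
      · by_cases hlw : l' = w
        · exact hlw ▸ Relation.ReflTransGen.refl
        obtain hd | ⟨d, hadjd, hdl'⟩ := hwl'.cases_head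
        · exact absurd hd (fun he => hlw he.symm)
        have hda₁ : Sg.Reach d a₁ := hdl'.trans (hl' a₁ ha₁m)
        have hda₂ : Sg.Reach d a₂ := hdl'.trans (hl' a₂ ha₂m)
        have he₁ : d = d₁ := child_eq_of_common hFfin hSac hShyb hadjd hadj₁ hda₁ hd₁a₁
        have he₂ : d = d₂ := child_eq_of_common hFfin hSac hShyb hadjd hadj₂ hda₂ hd₂a₂
        exact absurd (he₁ ▸ he₂) hdne


end Phylo
end

section
/- Let (T=(V,E);t,σ) be an event-labeled gene tree, let S=(W,F) be a species tree, and let μ: V → W∪F be a map. Then μ is a tree reconciliation map from (T;t,σ) to S if and only if μ is a TreeNet-reconciliation map from (T;t,σ) to S that additionally satisfies Property (R2.iii). -/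
namespace Phylo

variable {V E W F D U S : Type}

/-- Property (R2.iii): the images of any two distinct children of a speciation
    vertex are incomparable. -/
def SatR2iii (T : MGraph V E) (lvT : Set V) (t : V → Event)
    (Sg : MGraph W F) (μ : V → W ⊕ F) : Prop :=
  ∀ x : V, x ∉ lvT → t x = Event.spec →
    ∀ y₁ y₂ : V, T.Adj x y₁ → T.Adj x y₂ → y₁ ≠ y₂ →
      ¬ Sg.sle (μ y₁) (μ y₂) ∧ ¬ Sg.sle (μ y₂) (μ y₁)

section Helpers

variable {V E W F S : Type}

open Relation

/-- Every non-leaf vertex of a gene tree has a child. -/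
lemma adj_of_notleaf {T : MGraph V E} {lvT : Set V} {ρT : V} {σ : V → S}
    (hT : IsGeneTree T lvT ρT σ) {v : V} (hv : v ∉ lvT) : ∃ c, T.Adj v c := by
  have hfin : Finite E := hT.finE
  have hout : 1 ≤ T.outDeg v := by
    rcases eq_or_ne v ρT with rfl | hne
    · exact le_trans (by norm_num) hT.root_out
    · exact le_trans (by norm_num) (hT.inner_deg v hv hne).2
  by_contra h
  push_neg at h
  have hemp : IsEmpty {e : E // T.tail e = v} := by
    constructor; rintro ⟨e, he⟩
    exact h (T.head e) ⟨e, he, rfl⟩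
  rw [MGraph.outDeg, Nat.card_of_isEmpty] at hout
  omega

/-- Below every vertex of a gene tree there is a leaf. -/
lemma leaf_below {T : MGraph V E} {lvT : Set V} {ρT : V} {σ : V → S}
    (hT : IsGeneTree T lvT ρT σ) (v : V) : ∃ g ∈ lvT, T.Reach v g := by
  have hfin : Finite V := hT.finV
  have hirr : IsIrrefl V (fun a b => Relation.TransGen T.Adj b a) := ⟨fun a => hT.acyclic a⟩
  have htr : IsTrans V (fun a b => Relation.TransGen T.Adj b a) :=
    ⟨fun a b c h1 h2 => h2.trans h1⟩
  have wf := Finite.wellFounded_of_trans_of_irrefl (fun a b => Relation.TransGen T.Adj b a)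
  induction v using wf.induction with
  | _ v IH =>
    by_cases hv : v ∈ lvT
    · exact ⟨v, hv, Relation.ReflTransGen.refl⟩
    · obtain ⟨c, hc⟩ := adj_of_notleaf hT hv
      obtain ⟨g, hg, hr⟩ := IH c (Relation.TransGen.single hc)
      exact ⟨g, hg, Relation.ReflTransGen.head hc hr⟩

/-- In a graph without hybrid vertices, in-neighbours are unique. -/
lemma head_unique {N : MGraph W F} (hnh : NoHybrid N) (hfin : Finite F)
    {u u' v : W} (h1 : N.Adj u v) (h2 : N.Adj u' v) : u = u' := by
  obtain ⟨e, he1, he2⟩ := h1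
  obtain ⟨f, hf1, hf2⟩ := h2
  have hef : (⟨e, he2⟩ : {e : F // N.head e = v}) = ⟨f, hf2⟩ := by
    by_contra hne
    have : 1 < Nat.card {e : F // N.head e = v} :=
      Finite.one_lt_card_iff_nontrivial.mpr ⟨_, _, hne⟩
    have := hnh v
    rw [MGraph.inDeg] at this
    omega
  have : e = f := Subtype.mk.injEq .. ▸ hef
  rw [← he1, ← hf1, this]

/-- In a tree, the ancestors of a vertex are pairwise comparable. -/
lemma ancestors_comparable {N : MGraph W F} (hnh : NoHybrid N) (hfin : Finite F)
    {u v a : W} (hu : N.Reach u a) (hv : N.Reach v a) :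
    N.Reach u v ∨ N.Reach v u := by
  induction hu using Relation.ReflTransGen.head_induction_on with
  | refl => exact Or.inr hv
  | head hadj hreach IH =>
    rcases IH with h | h
    · exact Or.inl (Relation.ReflTransGen.head hadj h)
    · rcases h.cases_tail with h' | ⟨d, hvd, hdc⟩
      · exact Or.inl (h' ▸ Relation.ReflTransGen.single hadj)
      · exact Or.inr ((head_unique hnh hfin hdc hadj) ▸ hvd)

/-- In an acyclic tree, a child reaching another child forces equality. -/
lemma child_eq {N : MGraph W F} (hac : N.Acyclic) (hnh : NoHybrid N) (hfin : Finite F)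
    {w z z' : W} (h1 : N.Adj w z) (h2 : N.Adj w z') (hr : N.Reach z z') : z = z' := by
  rcases hr.cases_tail with h | ⟨d, hzd, hdz'⟩
  · exact h.symm
  · have hd : d = w := head_unique hnh hfin hdz' h2
    exact absurd (Relation.TransGen.tail' (hd ▸ hzd) h1) (hac z)

/-- First step of a nontrivial directed path. -/
lemma first_step {N : MGraph W F} {w v : W} (h : N.Reach w v) (hne : v ≠ w) :
    ∃ z, N.Adj w z ∧ N.Reach z v := by
  rcases h.cases_head with h' | ⟨z, h1, h2⟩
  · exact absurd h'.symm hne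
  · exact ⟨z, h1, h2⟩

/-- The image point of a child of a speciation vertex lies strictly below the
    image of the vertex. -/
lemma hpt_child_lt {T : MGraph V E} {lvT : Set V} {t : V → Event}
    {N : MGraph W F} {μ : V → W ⊕ F}
    (hac : N.Acyclic) (hacT : T.Acyclic)
    (hR3s : ∀ x y : V, T.vlt x y →
      ¬ (x ∉ lvT ∧ y ∉ lvT ∧ t x = Event.dupl ∧ t y = Event.dupl) → N.slt (μ x) (μ y))
    {x c : V} {w : W} (hadj : T.Adj x c) (hx : μ x = Sum.inl w)
    (hts : t x = Event.spec) :
    N.Reach w (N.hpt (μ c)) ∧ N.hpt (μ c) ≠ w := by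
  have hcx : c ≠ x := fun h => hacT x (Relation.TransGen.single (h ▸ hadj))
  have hlt : T.vlt c x := ⟨Relation.ReflTransGen.single hadj, hcx⟩
  have hslt := hR3s c x hlt (by simp [hts])
  rw [hx] at hslt
  rcases hmc : μ c with v | e <;> rw [hmc] at hslt
  · exact ⟨hslt.1, hslt.2⟩
  · have hslt' : N.Reach w (N.tail e) := hslt
    have harc : N.Adj (N.tail e) (N.head e) := ⟨e, rfl, rfl⟩
    refine ⟨hslt'.tail harc, fun h => ?_⟩
    have htg : Relation.TransGen N.Adj w (N.head e) := Relation.TransGen.tail' hslt' harc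
    have h2 : N.head e = w := h
    exact hac w (h2 ▸ htg)

/-- The species of a leaf below a vertex lies below the image point of that
    vertex. -/
lemma leaf_below_hpt {T : MGraph V E} {lvT : Set V} {t : V → Event} {σ : V → S}
    {N : MGraph W F} {sp : S → W} {μ : V → W ⊕ F}
    (hR1 : ∀ x ∈ lvT, μ x = Sum.inl (sp (σ x)))
    (hR3s : ∀ x y : V, T.vlt x y →
      ¬ (x ∉ lvT ∧ y ∉ lvT ∧ t x = Event.dupl ∧ t y = Event.dupl) → N.slt (μ x) (μ y))
    {c g : V} (hg : g ∈ lvT) (hreach : T.Reach c g) :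
    N.Reach (N.hpt (μ c)) (sp (σ g)) := by
  rcases eq_or_ne g c with rfl | hne
  · rw [hR1 g hg]; exact Relation.ReflTransGen.refl
  · have hslt := hR3s g c ⟨hreach, hne⟩ (fun h => h.1 hg)
    rw [hR1 g hg] at hslt
    rcases hmc : μ c with v | e <;> rw [hmc] at hslt
    · exact hslt.1
    · exact hslt

end Helpers

/-- For an event-labeled gene tree `(T;t,σ)`, a species tree `S` and
    a map `μ : V → W ∪ F`, `μ` is a tree reconciliation map (i.e. a relaxed tree
    reconciliation map which additionally satisfies (R2.iii)) from `(T;t,σ)` to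
    `S` iff it is a TreeNet-reconciliation map from `(T;t,σ)` to `S` which
    additionally satisfies (R2.iii). -/
theorem tree_recon_iff_treenet_r2iii {V E W F S : Type}
    (T : MGraph V E) (lvT : Set V) (ρT : V) (t : V → Event) (σ : V → S)
    (hT : IsGeneTree T lvT ρT σ)
    (Sg : MGraph W F) (lvS : Set W) (ρS : W) (sp : S → W)
    (hS : IsPhyloTree Sg lvS ρS) (hsp : IsLeafLabeling Sg lvS sp)
    (μ : V → W ⊕ F) :
    (IsRelaxedRecon T lvT t σ Sg sp μ ∧ SatR2iii T lvT t Sg μ) ↔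
      (IsTreeNetRecon T lvT t σ Sg sp μ ∧ SatR2iii T lvT t Sg μ) := by
  have hacS : Sg.Acyclic := hS.1.acyclic
  have hnh : NoHybrid Sg := hS.2.2
  have hfinF : Finite F := hS.1.finE
  have hacT := hT.acyclic
  constructor
  · rintro ⟨hR, hiii⟩
    refine ⟨⟨hR.R1, ?_, hR.R2ii, hR.R3d, hR.R3s⟩, hiii⟩
    intro x hx hts
    obtain ⟨w, hw, hlca⟩ := hR.R2istar x hx hts
    refine ⟨w, hw, ?_⟩
    obtain ⟨c0, hc0⟩ := adj_of_notleaf hT hx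
    have hb0 := hpt_child_lt hacS hacT hR.R3s hc0 hw hts
    obtain ⟨z0, hz0a, hz0r⟩ := first_step hb0.1 hb0.2
    by_cases hall : ∀ c : V, T.Adj x c → Sg.Reach z0 (Sg.hpt (μ c))
    · exfalso
      have hanc : ∀ a ∈ sp '' (σ '' leavesBelow T lvT x), Sg.Reach z0 a := by
        rintro a ⟨s, ⟨g, ⟨hg, hxg⟩, rfl⟩, rfl⟩
        have hgx : g ≠ x := fun h => hx (h ▸ hg)
        obtain ⟨c, hcadj, hcg⟩ := first_step hxg hgx
        exact (hall c hcadj).trans (leaf_below_hpt hR.R1 hR.R3s hg hcg)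
      have hzw := hlca.2 z0 hanc
      exact hacS w (Relation.TransGen.head' hz0a hzw)
    · push_neg at hall
      obtain ⟨c1, hc1, hnr⟩ := hall
      have hb1 := hpt_child_lt hacS hacT hR.R3s hc1 hw hts
      obtain ⟨z1, hz1a, hz1r⟩ := first_step hb1.1 hb1.2
      have hzz : z0 ≠ z1 := fun h => hnr (h ▸ hz1r)
      exact ⟨c0, c1, hc0, hc1, z0, z1, hzz, hz0a, hz1a, hz0r, hz1r⟩
  · rintro ⟨hR, hiii⟩
    refine ⟨⟨hR.R1, ?_, hR.R2ii, hR.R3d, hR.R3s⟩, hiii⟩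
    intro x hx hts
    obtain ⟨w, hw, c1, c2, hc1, hc2, z1, z2, hzz, hz1a, hz2a, hz1r, hz2r⟩ :=
      hR.R2i x hx hts
    refine ⟨w, hw, ?_, ?_⟩
    · rintro a ⟨s, ⟨g, ⟨hg, hxg⟩, rfl⟩, rfl⟩
      have hgx : g ≠ x := fun h => hx (h ▸ hg)
      have hslt := hR.R3s g x ⟨hxg, hgx⟩ (fun h => h.1 hg)
      rw [hR.R1 g hg, hw] at hslt
      exact hslt.1
    · intro l' hl'
      obtain ⟨g1, hg1, hr1⟩ := leaf_below hT c1
      obtain ⟨g2, hg2, hr2⟩ := leaf_below hT c2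
      have ha1 : Sg.Reach z1 (sp (σ g1)) :=
        hz1r.trans (leaf_below_hpt hR.R1 hR.R3s hg1 hr1)
      have ha2 : Sg.Reach z2 (sp (σ g2)) :=
        hz2r.trans (leaf_below_hpt hR.R1 hR.R3s hg2 hr2)
      have hA1 : sp (σ g1) ∈ sp '' (σ '' leavesBelow T lvT x) :=
        ⟨σ g1, ⟨g1, ⟨hg1, Relation.ReflTransGen.head hc1 hr1⟩, rfl⟩, rfl⟩
      have hA2 : sp (σ g2) ∈ sp '' (σ '' leavesBelow T lvT x) :=
        ⟨σ g2, ⟨g2, ⟨hg2, Relation.ReflTransGen.head hc2 hr2⟩, rfl⟩, rfl⟩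
      have hw1 : Sg.Reach w (sp (σ g1)) := Relation.ReflTransGen.head hz1a ha1
      rcases ancestors_comparable hnh hfinF (hl' _ hA1) hw1 with h | h
      · exact h
      · rcases eq_or_ne l' w with rfl | hne
        · exact Relation.ReflTransGen.refl
        obtain ⟨z, hza, hzr⟩ := first_step h hne
        have e1 : z = z1 := by
          have hcz : Sg.Reach z (sp (σ g1)) := hzr.trans (hl' _ hA1)
          rcases ancestors_comparable hnh hfinF hcz ha1 with h' | h'
          · exact child_eq hacS hnh hfinF hza hz1a h'
          · exact (child_eq hacS hnh hfinF hz1a hza h').symm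
        have e2 : z = z2 := by
          have hcz : Sg.Reach z (sp (σ g2)) := hzr.trans (hl' _ hA2)
          rcases ancestors_comparable hnh hfinF hcz ha2 with h' | h'
          · exact child_eq hacS hnh hfinF hza hz2a h'
          · exact (child_eq hacS hnh hfinF hz2a hza h').symm
        exact absurd (e1 ▸ e2) hzz


end Phylo
end

section
/- Let (M,χ) be a MUL-tree on 𝕊, let (M',χ) denote its simple subdivision, and let N be the digraph obtained from M' by identifying, for each x∈𝕊, all arcs of M' whose head is a leaf in χ(x) into a single arc (par(x),x). Then N is a network on 𝕊. -/
namespace Phylo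

variable {V E W F D U S : Type}

/-- `(M, lv, ρ, χ)` is a pseudo MUL-tree on the species set `S`:
    a rooted tree (possibly with indegree-1 outdegree-1 vertices) whose root has
    indegree 0 and outdegree 1, together with a labeling `χ` of the leaves by `S`
    with pairwise disjoint nonempty classes covering all leaves. -/
structure IsPMULTree (M : MGraph D U) (lv : Set D) (ρ : D) (χ : S → Set D) : Prop where
  finD : Finite D
  finU : Finite U
  acyclic : M.Acyclic
  root_in : M.inDeg ρ = 0
  root_out : M.outDeg ρ = 1
  leaf_iff : ∀ v : D, v ∈ lv ↔ (M.outDeg v = 0 ∧ M.inDeg v = 1)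
  inner_deg : ∀ v : D, v ∉ lv → v ≠ ρ → M.inDeg v = 1 ∧ 1 ≤ M.outDeg v
  chi_sub : ∀ x : S, χ x ⊆ lv
  chi_ne : ∀ x : S, (χ x).Nonempty
  chi_disj : ∀ x y : S, x ≠ y → Disjoint (χ x) (χ y)
  chi_cover : ∀ l ∈ lv, ∃ x : S, l ∈ χ x
  species_nontriv : ∃ x y : S, x ≠ y

/-- A MUL-tree is a pseudo MUL-tree whose underlying tree is a phylogenetic tree,
    i.e., without indegree-1 outdegree-1 vertices. -/
def IsMULTree (M : MGraph D U) (lv : Set D) (ρ : D) (χ : S → Set D) : Prop :=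
  IsPMULTree M lv ρ χ ∧ ∀ v : D, v ∉ lv → v ≠ ρ → 2 ≤ M.outDeg v

/-- `D¹`: the set of vertices with indegree one and outdegree one. -/
def D1set (M : MGraph D U) : Set D := {v | M.inDeg v = 1 ∧ M.outDeg v = 1}

/-- A MUL-reconciliation map `κ : V → (D∖D¹) ∪ U` from the event-labeled gene tree
    `(T;t,σ)` to the pseudo MUL-tree `(M,χ)`:
    (M1) each leaf maps to a leaf of `M` labeled by its species;
    (M2.i) a speciation vertex maps to an inner vertex of `M` admitting directed
    paths to the images of two distinct children whose first arcs are incomparable;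
    (M2.ii) a duplication vertex maps to an arc;
    (M3) ancestor relations are preserved (strictly, unless both are duplications). -/
structure IsMULRecon (T : MGraph V E) (lvT : Set V) (t : V → Event) (σ : V → S)
    (M : MGraph D U) (lvM : Set D) (χ : S → Set D) (κ : V → D ⊕ U) : Prop where
  M0 : ∀ (x : V) (d : D), κ x = Sum.inl d → d ∉ D1set M
  M1 : ∀ x ∈ lvT, ∃ d : D, κ x = Sum.inl d ∧ d ∈ lvM ∧ d ∈ χ (σ x)
  M2i : ∀ x : V, x ∉ lvT → t x = Event.spec →
      ∃ d : D, κ x = Sum.inl d ∧ d ∉ lvM ∧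
        ∃ c₁ c₂ : V, T.Adj x c₁ ∧ T.Adj x c₂ ∧ c₁ ≠ c₂ ∧
          ∃ a₁ a₂ : U, M.tail a₁ = d ∧ M.tail a₂ = d ∧
            M.Reach (M.head a₁) (M.hpt (κ c₁)) ∧
            M.Reach (M.head a₂) (M.hpt (κ c₂)) ∧
            ¬ M.sle (Sum.inr a₁) (Sum.inr a₂) ∧ ¬ M.sle (Sum.inr a₂) (Sum.inr a₁)
  M2ii : ∀ x : V, x ∉ lvT → t x = Event.dupl → ∃ a : U, κ x = Sum.inr a
  M3d : ∀ x y : V, T.vlt x y → x ∉ lvT → y ∉ lvT →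
      t x = Event.dupl → t y = Event.dupl → M.sle (κ x) (κ y)
  M3s : ∀ x y : V, T.vlt x y →
      ¬ (x ∉ lvT ∧ y ∉ lvT ∧ t x = Event.dupl ∧ t y = Event.dupl) →
      M.slt (κ x) (κ y)

/-- `x` is a species with at least two leaves labeled by it. -/
def MultiSp (χ : S → Set D) (x : S) : Prop :=
  ∃ l₁ l₂ : D, l₁ ∈ χ x ∧ l₂ ∈ χ x ∧ l₁ ≠ l₂

/-- Vertices of the network obtained by folding up (the simple subdivision of) a
    MUL-tree: the inner vertices of the MUL-tree, a leaf for each species, and a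
    hybrid vertex for each species labeling at least two leaves. -/
def FoldV (D S : Type) (lv : Set D) (χ : S → Set D) : Type :=
  {d : D // d ∉ lv} ⊕ (S ⊕ {x : S // MultiSp χ x})

/-- Arcs of the folded-up network: the arcs of the MUL-tree (redirected), plus one
    arc `(par x, x)` for every species `x` labeling at least two leaves. -/
def FoldE (U : Type) {D S : Type} (χ : S → Set D) : Type :=
  U ⊕ {x : S // MultiSp χ x}

open Classical in
/-- The digraph obtained from the simple subdivision of the MUL-tree `(M,χ)` by
    identifying, for each species `x`, all arcs whose head is a leaf in `χ x`
    to a single arc `(par x, x)`. -/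
noncomputable def foldGraph (M : MGraph D U) (lv : Set D) (χ : S → Set D)
    (htail : ∀ e : U, M.tail e ∉ lv)
    (hcov : ∀ d ∈ lv, ∃ x : S, d ∈ χ x) :
    MGraph (FoldV D S lv χ) (FoldE U χ) where
  tail a :=
    match a with
    | Sum.inl e => Sum.inl ⟨M.tail e, htail e⟩
    | Sum.inr x => Sum.inr (Sum.inr x)
  head a :=
    match a with
    | Sum.inl e =>
        if h : M.head e ∈ lv then
          if hm : MultiSp χ (Classical.choose (hcov _ h)) then
            Sum.inr (Sum.inr ⟨Classical.choose (hcov _ h), hm⟩)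
          else Sum.inr (Sum.inl (Classical.choose (hcov _ h)))
        else Sum.inl ⟨M.head e, h⟩
    | Sum.inr x => Sum.inr (Sum.inl x.1)

/-- Leaves of the folded-up network: one for each species. -/
def foldLeaves (lv : Set D) (χ : S → Set D) : Set (FoldV D S lv χ) :=
  Set.range fun x : S => Sum.inr (Sum.inl x)

/-- Species labeling of the folded-up network. -/
def foldSp (lv : Set D) (χ : S → Set D) : S → FoldV D S lv χ :=
  fun x => Sum.inr (Sum.inl x)

/-- Root of the folded-up network. -/
def foldRoot (lv : Set D) (χ : S → Set D) (ρ : D) (hρ : ρ ∉ lv) : FoldV D S lv χ :=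
  Sum.inl ⟨ρ, hρ⟩

section FoldAux

variable {D U S : Type} {M : MGraph D U} {lv : Set D} {χ : S → Set D}
  {htail : ∀ e : U, M.tail e ∉ lv} {hcov : ∀ d ∈ lv, ∃ x : S, d ∈ χ x}

open Classical in
private lemma fold_head_def (e : U) : (foldGraph M lv χ htail hcov).head (Sum.inl e) =
    (if h : M.head e ∈ lv then
          if hm : MultiSp χ (Classical.choose (hcov _ h)) then
            Sum.inr (Sum.inr ⟨Classical.choose (hcov _ h), hm⟩)
          else Sum.inr (Sum.inl (Classical.choose (hcov _ h)))
        else Sum.inl ⟨M.head e, h⟩) := rfl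

private lemma fold_choose_eq (hdisj : ∀ x y : S, x ≠ y → Disjoint (χ x) (χ y))
    {d : D} (h : d ∈ lv) {x : S} (hx : d ∈ χ x) : Classical.choose (hcov d h) = x := by
  by_contra hne
  exact Set.disjoint_left.mp (hdisj _ _ hne) (Classical.choose_spec (hcov d h)) hx

private lemma head_eq_inl_iff {e : U} {d : {d : D // d ∉ lv}} :
    (foldGraph M lv χ htail hcov).head (Sum.inl e) = Sum.inl d ↔ M.head e = d.1 := by
  rw [fold_head_def]
  split_ifs with h hm
  · constructor
    · intro hh; exact absurd hh (by simp)
    · intro hh; exact absurd (hh ▸ h) d.2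
  · constructor
    · intro hh; exact absurd hh (by simp)
    · intro hh; exact absurd (hh ▸ h) d.2
  · constructor
    · intro hh
      have := Sum.inl.inj hh
      exact congrArg Subtype.val this
    · intro hh; exact congrArg Sum.inl (Subtype.ext hh)

private lemma head_eq_hyb_iff (hdisj : ∀ x y : S, x ≠ y → Disjoint (χ x) (χ y))
    (hsub : ∀ x : S, χ x ⊆ lv) {e : U} {x : {x : S // MultiSp χ x}} :
    (foldGraph M lv χ htail hcov).head (Sum.inl e) = Sum.inr (Sum.inr x) ↔ M.head e ∈ χ x.1 := by
  rw [fold_head_def]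
  split_ifs with h hm
  · constructor
    · intro hh
      have h1 : (⟨Classical.choose (hcov _ h), hm⟩ : {x : S // MultiSp χ x}) = x :=
        Sum.inr.inj (Sum.inr.inj hh)
      have h2 : Classical.choose (hcov _ h) = x.1 := congrArg Subtype.val h1
      exact h2 ▸ Classical.choose_spec (hcov _ h)
    · intro hh
      have h2 : Classical.choose (hcov _ h) = x.1 := fold_choose_eq hdisj h hh
      exact congrArg Sum.inr (congrArg Sum.inr (Subtype.ext h2))
  · constructor
    · intro hh; exact absurd (Sum.inr.inj hh) (fun hq => nomatch hq)
    · intro hh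
      have h2 : Classical.choose (hcov _ h) = x.1 := fold_choose_eq hdisj h hh
      exact absurd (h2 ▸ x.2) hm
  · constructor
    · intro hh; exact absurd hh (by simp)
    · intro hh; exact absurd (hsub x.1 hh) h

private lemma head_eq_sp_iff (hdisj : ∀ x y : S, x ≠ y → Disjoint (χ x) (χ y))
    (hsub : ∀ x : S, χ x ⊆ lv) {e : U} {x : S} (hx : ¬ MultiSp χ x) :
    (foldGraph M lv χ htail hcov).head (Sum.inl e) = Sum.inr (Sum.inl x) ↔ M.head e ∈ χ x := by
  rw [fold_head_def]
  split_ifs with h hm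
  · constructor
    · intro hh; exact absurd (Sum.inr.inj hh) (fun hq => nomatch hq)
    · intro hh
      exact absurd ((fold_choose_eq hdisj h hh) ▸ hm) hx
  · constructor
    · intro hh
      have h2 : Classical.choose (hcov _ h) = x := Sum.inl.inj (Sum.inr.inj hh)
      exact h2 ▸ Classical.choose_spec (hcov _ h)
    · intro hh
      exact congrArg Sum.inr (congrArg Sum.inl (fold_choose_eq hdisj h hh))
  · constructor
    · intro hh; exact absurd hh (by simp)
    · intro hh; exact absurd (hsub x hh) h

private lemma head_sp_not_multi {e : U} {x : S}
    (h : (foldGraph M lv χ htail hcov).head (Sum.inl e) = Sum.inr (Sum.inl x)) :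
    ¬ MultiSp χ x := by
  rw [fold_head_def] at h
  split_ifs at h with h1 h2
  · exact absurd (Sum.inr.inj h) (fun hq => nomatch hq)
  · have : Classical.choose (hcov _ h1) = x := Sum.inl.inj (Sum.inr.inj h)
    exact this ▸ h2

private lemma sp_arc_head_eq {y : {x : S // MultiSp χ x}} {x : S}
    (h : (foldGraph M lv χ htail hcov).head (Sum.inr y) = Sum.inr (Sum.inl x)) : y.1 = x := by
  have h' : (Sum.inr (Sum.inl y.1) : FoldV D S lv χ) = Sum.inr (Sum.inl x) := h
  exact Sum.inl.inj (Sum.inr.inj h')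

private lemma isEmpty_of_card_zero {α : Type} [Finite α] (h : Nat.card α = 0) : IsEmpty α := by
  by_contra hne
  rw [not_isEmpty_iff] at hne
  have := Nat.card_pos_iff.mpr ⟨hne, ‹Finite α›⟩
  omega

private lemma fold_inDeg_inl (d : {d : D // d ∉ lv}) :
    (foldGraph M lv χ htail hcov).inDeg (Sum.inl d) = M.inDeg d.1 := by
  refine (Nat.card_eq_of_bijective (fun e : {e : U // M.head e = d.1} =>
    (⟨Sum.inl e.1, head_eq_inl_iff.mpr e.2⟩ :
      {a : FoldE U χ // (foldGraph M lv χ htail hcov).head a = Sum.inl d})) ⟨?_, ?_⟩).symm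
  · intro e f hef
    exact Subtype.ext (Sum.inl.inj (congrArg Subtype.val hef))
  · rintro ⟨a, ha⟩
    cases a with
    | inl e => exact ⟨⟨e, head_eq_inl_iff.mp ha⟩, rfl⟩
    | inr y =>
        have h' : (Sum.inr (Sum.inl y.1) : FoldV D S lv χ) = Sum.inl d := ha
        exact absurd h' (fun hq => nomatch hq)

private lemma fold_outDeg_inl (d : {d : D // d ∉ lv}) :
    (foldGraph M lv χ htail hcov).outDeg (Sum.inl d) = M.outDeg d.1 := by
  refine (Nat.card_eq_of_bijective (fun e : {e : U // M.tail e = d.1} =>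
    (⟨Sum.inl e.1, congrArg Sum.inl (Subtype.ext e.2)⟩ :
      {a : FoldE U χ // (foldGraph M lv χ htail hcov).tail a = Sum.inl d})) ⟨?_, ?_⟩).symm
  · intro e f hef
    exact Subtype.ext (Sum.inl.inj (congrArg Subtype.val hef))
  · rintro ⟨a, ha⟩
    cases a with
    | inl e =>
        have h' : (Sum.inl ⟨M.tail e, htail e⟩ : FoldV D S lv χ) = Sum.inl d := ha
        exact ⟨⟨e, congrArg Subtype.val (Sum.inl.inj h')⟩, rfl⟩
    | inr y =>
        have h' : (Sum.inr (Sum.inr y) : FoldV D S lv χ) = Sum.inl d := ha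
        exact absurd h' (fun hq => nomatch hq)

private lemma fold_outDeg_sp (x : S) :
    (foldGraph M lv χ htail hcov).outDeg (Sum.inr (Sum.inl x)) = 0 := by
  unfold MGraph.outDeg
  rw [Nat.card_eq_zero]
  left
  constructor
  rintro ⟨a, ha⟩
  cases a with
  | inl e =>
      have h' : (Sum.inl ⟨M.tail e, htail e⟩ : FoldV D S lv χ) = Sum.inr (Sum.inl x) := ha
      exact nomatch h'
  | inr y =>
      have h' : (Sum.inr (Sum.inr y) : FoldV D S lv χ) = Sum.inr (Sum.inl x) := ha
      exact nomatch (Sum.inr.inj h')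

private lemma fold_outDeg_hyb (x : {x : S // MultiSp χ x}) :
    (foldGraph M lv χ htail hcov).outDeg (Sum.inr (Sum.inr x)) = 1 := by
  unfold MGraph.outDeg
  rw [Nat.card_eq_one_iff_unique]
  have key : ∀ a : {a : FoldE U χ //
      (foldGraph M lv χ htail hcov).tail a = Sum.inr (Sum.inr x)}, a.1 = Sum.inr x := by
    rintro ⟨a, ha⟩
    cases a with
    | inl e =>
        have h' : (Sum.inl ⟨M.tail e, htail e⟩ : FoldV D S lv χ) = Sum.inr (Sum.inr x) := ha
        exact absurd h' (fun hq => nomatch hq)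
    | inr y =>
        have h' : (Sum.inr (Sum.inr y) : FoldV D S lv χ) = Sum.inr (Sum.inr x) := ha
        exact congrArg Sum.inr (Sum.inr.inj (Sum.inr.inj h'))
  exact ⟨⟨fun a b => Subtype.ext ((key a).trans (key b).symm)⟩, ⟨⟨Sum.inr x, rfl⟩⟩⟩

private lemma fold_inDeg_sp
    (hdisj : ∀ x y : S, x ≠ y → Disjoint (χ x) (χ y))
    (hsub : ∀ x : S, χ x ⊆ lv)
    (hleafin : ∀ l ∈ lv, M.inDeg l = 1)
    {x : S} (hne : (χ x).Nonempty) :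
    (foldGraph M lv χ htail hcov).inDeg (Sum.inr (Sum.inl x)) = 1 := by
  by_cases hm : MultiSp χ x
  · unfold MGraph.inDeg
    rw [Nat.card_eq_one_iff_unique]
    have key : ∀ a : {a : FoldE U χ //
        (foldGraph M lv χ htail hcov).head a = Sum.inr (Sum.inl x)},
        a.1 = Sum.inr ⟨x, hm⟩ := by
      rintro ⟨a, ha⟩
      cases a with
      | inl e => exact absurd hm (head_sp_not_multi ha)
      | inr y => exact congrArg Sum.inr (Subtype.ext (sp_arc_head_eq ha))
    exact ⟨⟨fun a b => Subtype.ext ((key a).trans (key b).symm)⟩, ⟨⟨Sum.inr ⟨x, hm⟩, rfl⟩⟩⟩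
  · obtain ⟨l, hl⟩ := hne
    have huniq : ∀ l' ∈ χ x, l' = l := by
      intro l' hl'
      by_contra hq
      exact hm ⟨l', l, hl', hl, hq⟩
    have hmem_iff : ∀ e : U, M.head e ∈ χ x ↔ M.head e = l :=
      fun e => ⟨fun h => huniq _ h, fun h => h ▸ hl⟩
    have hbij : Nat.card {e : U // M.head e = l} =
        Nat.card {a : FoldE U χ //
          (foldGraph M lv χ htail hcov).head a = Sum.inr (Sum.inl x)} := by
      refine Nat.card_eq_of_bijective (fun e => ⟨Sum.inl e.1,
        (head_eq_sp_iff hdisj hsub hm).mpr ((hmem_iff e.1).mpr e.2)⟩) ⟨?_, ?_⟩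
      · intro e f hef
        exact Subtype.ext (Sum.inl.inj (congrArg Subtype.val hef))
      · rintro ⟨a, ha⟩
        cases a with
        | inl e => exact ⟨⟨e, (hmem_iff e).mp ((head_eq_sp_iff hdisj hsub hm).mp ha)⟩, rfl⟩
        | inr y => exact absurd ((sp_arc_head_eq ha) ▸ y.2) hm
    unfold MGraph.inDeg
    rw [← hbij]
    exact hleafin l (hsub x hl)

private lemma fold_inDeg_hyb [Finite U] [Finite S]
    (hdisj : ∀ x y : S, x ≠ y → Disjoint (χ x) (χ y))
    (hsub : ∀ x : S, χ x ⊆ lv)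
    (hleafin : ∀ l ∈ lv, M.inDeg l = 1)
    (x : {x : S // MultiSp χ x}) :
    2 ≤ (foldGraph M lv χ htail hcov).inDeg (Sum.inr (Sum.inr x)) := by
  haveI : Finite (FoldE U χ) := by unfold FoldE; infer_instance
  obtain ⟨l₁, l₂, hl₁, hl₂, hne⟩ := x.2
  obtain ⟨e₁, he₁⟩ := (Nat.card_eq_one_iff_unique.mp (hleafin l₁ (hsub _ hl₁))).2
  obtain ⟨e₂, he₂⟩ := (Nat.card_eq_one_iff_unique.mp (hleafin l₂ (hsub _ hl₂))).2
  have hne' : e₁ ≠ e₂ := by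
    intro h
    exact hne (by rw [← he₁, ← he₂, h])
  have m₁ : (foldGraph M lv χ htail hcov).head (Sum.inl e₁) = Sum.inr (Sum.inr x) :=
    (head_eq_hyb_iff hdisj hsub).mpr (by rw [he₁]; exact hl₁)
  have m₂ : (foldGraph M lv χ htail hcov).head (Sum.inl e₂) = Sum.inr (Sum.inr x) :=
    (head_eq_hyb_iff hdisj hsub).mpr (by rw [he₂]; exact hl₂)
  have hnt : Nontrivial {a : FoldE U χ //
      (foldGraph M lv χ htail hcov).head a = Sum.inr (Sum.inr x)} :=
    ⟨⟨Sum.inl e₁, m₁⟩, ⟨Sum.inl e₂, m₂⟩, by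
      intro hq
      exact hne' (Sum.inl.inj (congrArg Subtype.val hq))⟩
  have := Finite.one_lt_card_iff_nontrivial.mpr hnt
  unfold MGraph.inDeg
  omega

private lemma fold_no_tail_sp (a : FoldE U χ) (x : S) :
    (foldGraph M lv χ htail hcov).tail a ≠ Sum.inr (Sum.inl x) := by
  cases a with
  | inl e =>
      intro h
      exact nomatch (show (Sum.inl ⟨M.tail e, htail e⟩ : FoldV D S lv χ)
        = Sum.inr (Sum.inl x) from h)
  | inr y =>
      intro h
      exact nomatch (Sum.inr.inj (show (Sum.inr (Sum.inr y) : FoldV D S lv χ)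
        = Sum.inr (Sum.inl x) from h))

private lemma fold_reach_from_sp {x : S} {w : FoldV D S lv χ}
    (h : (foldGraph M lv χ htail hcov).Reach (Sum.inr (Sum.inl x)) w) :
    w = Sum.inr (Sum.inl x) := by
  rcases h.cases_head with h | ⟨c, ⟨arc, ht, _⟩, _⟩
  · exact h.symm
  · exact absurd ht (fold_no_tail_sp arc x)

private lemma fold_reach_inl {v : FoldV D S lv χ} {b : {d : D // d ∉ lv}}
    (h : (foldGraph M lv χ htail hcov).Reach v (Sum.inl b)) :
    ∃ a : {d : D // d ∉ lv}, v = Sum.inl a ∧ M.Reach a.1 b.1 := by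
  induction h using Relation.ReflTransGen.head_induction_on with
  | refl => exact ⟨b, rfl, Relation.ReflTransGen.refl⟩
  | head hadj hrtg ih =>
      obtain ⟨a', hc, hr⟩ := ih
      obtain ⟨arc, ht, hh⟩ := hadj
      cases arc with
      | inr y =>
          rw [hc] at hh
          exact absurd (show (Sum.inr (Sum.inl y.1) : FoldV D S lv χ) = Sum.inl a' from hh)
            (fun hq => nomatch hq)
      | inl e =>
          rw [hc] at hh
          have hhe : M.head e = a'.1 := head_eq_inl_iff.mp hh
          refine ⟨⟨M.tail e, htail e⟩, ht.symm, ?_⟩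
          exact Relation.ReflTransGen.head ⟨e, rfl, hhe⟩ hr

private lemma fold_acyclic (hacy : M.Acyclic) :
    (foldGraph M lv χ htail hcov).Acyclic := by
  intro v hv
  have hstep : ∃ c, (foldGraph M lv χ htail hcov).Adj v c ∧
      (foldGraph M lv χ htail hcov).Reach c v := by
    rcases (Relation.transGen_iff _ _ _).mp hv with h | ⟨c, h1, h2⟩
    · exact ⟨v, h, Relation.ReflTransGen.refl⟩
    · rcases h1.to_reflTransGen.cases_head with heq | ⟨d, hd1, hd2⟩
      · exact ⟨v, by rw [heq] at h2 ⊢; exact h2, Relation.ReflTransGen.refl⟩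
      · exact ⟨d, hd1, hd2.trans (Relation.ReflTransGen.single h2)⟩
  obtain ⟨c, ⟨arc, ht, hh⟩, hr⟩ := hstep
  cases arc with
  | inr y =>
      have hc : c = Sum.inr (Sum.inl y.1) := hh.symm
      have hvs := fold_reach_from_sp (hc ▸ hr)
      rw [← ht] at hvs
      exact nomatch (Sum.inr.inj (show (Sum.inr (Sum.inr y) : FoldV D S lv χ)
        = Sum.inr (Sum.inl y.1) from hvs))
  | inl e =>
      have hv' : v = Sum.inl ⟨M.tail e, htail e⟩ := ht.symm
      obtain ⟨a', hca, hra⟩ := fold_reach_inl (b := ⟨M.tail e, htail e⟩) (hv' ▸ hr)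
      rw [hca] at hh
      have hhe : M.head e = a'.1 := head_eq_inl_iff.mp hh
      exact hacy (M.tail e) (Relation.TransGen.head' ⟨e, rfl, hhe⟩ hra)

private lemma M_reach_root [Finite D] (hacy : M.Acyclic) {ρ : D}
    (hin : ∀ v : D, v ≠ ρ → M.inDeg v = 1) (v : D) : M.Reach ρ v := by
  haveI : IsIrrefl D (Relation.TransGen M.Adj) := ⟨hacy⟩
  have wf := Finite.wellFounded_of_trans_of_irrefl (Relation.TransGen M.Adj)
  refine WellFounded.induction wf v ?_
  intro x ih
  by_cases hx : x = ρ
  · subst hx; exact Relation.ReflTransGen.refl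
  · obtain ⟨e, he⟩ := (Nat.card_eq_one_iff_unique.mp (hin x hx)).2
    have hadj : M.Adj (M.tail e) x := ⟨e, rfl, he⟩
    exact (ih (M.tail e) (Relation.TransGen.single hadj)).tail hadj

private lemma head_root_arc_not_leaf {ρ : D}
    (hP : IsPMULTree M lv ρ χ) (hρ : ρ ∉ lv) {e : U} (he : M.tail e = ρ) :
    M.head e ∉ lv := by
  haveI : Finite D := hP.finD
  haveI : Finite U := hP.finU
  intro hleaf
  obtain ⟨x, y, hxy⟩ := hP.species_nontriv
  obtain ⟨l₁, hl₁⟩ := hP.chi_ne x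
  obtain ⟨l₂, hl₂⟩ := hP.chi_ne y
  have hl12 : l₁ ≠ l₂ := fun h =>
    Set.disjoint_left.mp (hP.chi_disj x y hxy) hl₁ (h ▸ hl₂)
  have hin : ∀ v : D, v ≠ ρ → M.inDeg v = 1 := by
    intro v hv
    by_cases hvl : v ∈ lv
    · exact ((hP.leaf_iff v).mp hvl).2
    · exact (hP.inner_deg v hvl hv).1
  obtain ⟨l, hlv, hlne⟩ : ∃ l, l ∈ lv ∧ l ≠ M.head e := by
    by_cases h1 : l₁ = M.head e
    · refine ⟨l₂, hP.chi_sub y hl₂, fun h => hl12 (h1.trans h.symm)⟩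
    · exact ⟨l₁, hP.chi_sub x hl₁, h1⟩
  have hreach : M.Reach ρ l := M_reach_root hP.acyclic hin l
  have hlρ : l ≠ ρ := fun h => hρ (h ▸ hlv)
  rcases hreach.cases_head with h | ⟨c, ⟨f, hf, hfh⟩, hrest⟩
  · exact hlρ h.symm
  · have hsub1 : Subsingleton {g : U // M.tail g = ρ} :=
      (Nat.card_eq_one_iff_unique.mp hP.root_out).1
    have hfe : f = e :=
      congrArg Subtype.val (hsub1.elim (⟨f, hf⟩ : {g : U // M.tail g = ρ}) ⟨e, he⟩)
    have hc : M.head e = c := hfe ▸ hfh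
    have hout0 : M.outDeg (M.head e) = 0 := ((hP.leaf_iff _).mp hleaf).1
    haveI hE : IsEmpty {g : U // M.tail g = M.head e} := isEmpty_of_card_zero hout0
    rcases hrest.cases_head with h | ⟨c', ⟨g, hg, _⟩, _⟩
    · exact hlne ((hc.trans h).symm)
    · exact hE.elim ⟨g, hg.trans hc.symm⟩

end FoldAux

/-- Let `(M,χ)` be a MUL-tree on `𝕊`, let `(M',χ)` be its simple
    subdivision, and let `N` be the digraph obtained from `M'` by identifying, for
    each `x ∈ 𝕊`, all arcs of `M'` whose head is a leaf in `χ x` into a single arc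
    `(par x, x)` (this composite is `foldGraph`). Then `N` is a network on `𝕊`. -/
theorem fold_is_network {D U S : Type}
    (M : MGraph D U) (lv : Set D) (ρ : D) (χ : S → Set D)
    (hM : IsMULTree M lv ρ χ)
    (htail : ∀ e : U, M.tail e ∉ lv) (hρ : ρ ∉ lv) :
    IsNetwork (foldGraph M lv χ htail hM.1.chi_cover)
        (foldLeaves lv χ) (foldRoot lv χ ρ hρ) ∧
      IsLeafLabeling (foldGraph M lv χ htail hM.1.chi_cover)
        (foldLeaves lv χ) (foldSp lv χ) := by

  have hP := hM.1
  have hMul := hM.2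
  haveI : Finite D := hP.finD
  haveI : Finite U := hP.finU
  haveI : Finite S := by
    have hinj : Function.Injective (fun x : S => (hP.chi_ne x).some) := by
      intro a b hab
      simp only at hab
      by_contra hne
      have hm : (hP.chi_ne a).some ∈ χ b := by
        rw [hab]
        exact (hP.chi_ne b).some_mem
      exact Set.disjoint_left.mp (hP.chi_disj a b hne) (hP.chi_ne a).some_mem hm
    exact Finite.of_injective _ hinj
  have hdisj := hP.chi_disj
  have hsub := hP.chi_sub
  have hleafin : ∀ l ∈ lv, M.inDeg l = 1 := fun l hl => ((hP.leaf_iff l).mp hl).2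
  refine ⟨⟨?_, ?_, ?_, ?_, ?_, ?_, ?_, ?_, ?_⟩, ?_, ?_, ?_⟩
  · show Finite (FoldV D S lv χ)
    unfold FoldV
    infer_instance
  · show Finite (FoldE U χ)
    unfold FoldE
    infer_instance
  · exact fold_acyclic hP.acyclic
  · exact (fold_inDeg_inl ⟨ρ, hρ⟩).trans hP.root_in
  · exact (fold_outDeg_inl ⟨ρ, hρ⟩).trans hP.root_out
  · intro c hadj
    obtain ⟨arc, ht, hh⟩ := hadj
    cases arc with
    | inr y =>
        exact absurd (show (Sum.inr (Sum.inr y) : FoldV D S lv χ) = Sum.inl ⟨ρ, hρ⟩ from ht)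
          (fun hq => nomatch hq)
    | inl e =>
        have he : M.tail e = ρ := congrArg Subtype.val (Sum.inl.inj
          (show (Sum.inl ⟨M.tail e, htail e⟩ : FoldV D S lv χ) = Sum.inl ⟨ρ, hρ⟩ from ht))
        have hnl : M.head e ∉ lv := head_root_arc_not_leaf hP hρ he
        have hcc : c = Sum.inl ⟨M.head e, hnl⟩ := by
          rw [← hh]
          exact head_eq_inl_iff.mpr rfl
        have hne_root : M.head e ≠ ρ := by
          intro hq
          haveI hE : IsEmpty {f : U // M.head f = ρ} := isEmpty_of_card_zero hP.root_in
          exact hE.elim ⟨e, hq⟩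
        subst hcc
        constructor
        · exact (fold_inDeg_inl _).trans (hP.inner_deg _ hnl hne_root).1
        · rw [fold_outDeg_inl]
          exact hMul _ hnl hne_root
  · intro v
    constructor
    · rintro ⟨x, rfl⟩
      exact ⟨fold_outDeg_sp x, fold_inDeg_sp hdisj hsub hleafin (hP.chi_ne x)⟩
    · rintro ⟨hout, hin⟩
      cases v with
      | inl d =>
          rw [fold_outDeg_inl] at hout
          rw [fold_inDeg_inl] at hin
          exact absurd ((hP.leaf_iff d.1).mpr ⟨hout, hin⟩) d.2
      | inr w =>
          cases w with
          | inl x => exact ⟨x, rfl⟩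
          | inr y =>
              have h1 := fold_outDeg_hyb (M := M) (htail := htail)
                (hcov := hM.1.chi_cover) y
              exact absurd (h1.symm.trans hout) one_ne_zero
  · intro v hvl hvr
    cases v with
    | inl d =>
        have hdρ : d.1 ≠ ρ := by
          intro hq
          exact hvr (congrArg Sum.inl (Subtype.ext hq))
        left
        constructor
        · exact (fold_inDeg_inl d).trans (hP.inner_deg d.1 d.2 hdρ).1
        · rw [fold_outDeg_inl]
          exact hMul d.1 d.2 hdρ
    | inr w =>
        cases w with
        | inl x => exact absurd ⟨x, rfl⟩ hvl
        | inr y =>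
            right
            exact ⟨fold_inDeg_hyb hdisj hsub hleafin y, fold_outDeg_hyb y⟩
  · obtain ⟨x, y, hxy⟩ := hP.species_nontriv
    exact ⟨Sum.inr (Sum.inl x), Sum.inr (Sum.inl y), ⟨x, rfl⟩, ⟨y, rfl⟩,
      fun h => hxy (Sum.inl.inj (Sum.inr.inj h))⟩
  · intro a b h
    exact Sum.inl.inj (Sum.inr.inj h)
  · intro s
    exact ⟨s, rfl⟩
  · rintro v ⟨x, rfl⟩
    exact ⟨x, rfl⟩

end Phylo
end

section
/- Every MUL-tree (M,χ) on 𝕊 can be folded into a network on 𝕊; that is, there exist a network N on 𝕊 and a subdivision M' of M together with a folding map from (M',χ) to N. -/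
namespace Phylo

variable {V E W F D U S : Type}

/-- A folding map `f = (fV, fE)` from a pseudo MUL-tree `(M,χ)` (with leaf set `lvM`)
    to the network `N` (with species labeling `sp`):
    (F1) `fV` and `fE` are compatible with tails and heads;
    (F2) each leaf of `M` is mapped to the species labeling it;
    (F3) each arc of `N` lifts uniquely at each preimage of its tail. -/
structure IsFoldingMap (M : MGraph D U) (lvM : Set D) (χ : S → Set D)
    (N : MGraph W F) (sp : S → W) (fV : D → W) (fE : U → F) : Prop where
  fV_surj : Function.Surjective fV
  fE_surj : Function.Surjective fE
  F1t : ∀ a : U, N.tail (fE a) = fV (M.tail a)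
  F1h : ∀ a : U, N.head (fE a) = fV (M.head a)
  F2 : ∀ v ∈ lvM, ∀ x : S, v ∈ χ x → fV v = sp x
  F3 : ∀ (a : F) (v : D), fV v = N.tail a → ∃! b : U, fE b = a ∧ M.tail b = v

/-- The internal vertices of a path given as a vertex list. -/
def internals (p : List V) : List V := (p.drop 1).dropLast

/-- `(M', lv', ρ', χ')` is a subdivision of the (pseudo) MUL-tree `(M, lv, ρ, χ)`:
    `M'` is obtained from `M` by replacing each arc by a directed path.
    The map `ι` embeds the vertices of `M` into `M'` and `P e` is the directed path
    of `M'` replacing the arc `e`; the internal vertices of these paths are new,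
    pairwise distinct, and together with the `ι`-images exhaust `M'`; every arc of
    `M'` lies on one of these paths. -/
def IsSubdivisionOf {D' U' : Type} (M' : MGraph D' U') (lv' : Set D') (ρ' : D')
    (χ' : S → Set D') (M : MGraph D U) (lv : Set D) (ρ : D) (χ : S → Set D) : Prop :=
  ∃ (ι : D → D') (P : U → List D'),
    Function.Injective ι ∧ ρ' = ι ρ ∧ lv' = ι '' lv ∧ (∀ x : S, χ' x = ι '' χ x) ∧
    (∀ e : U, M'.IsDiPath (P e) ∧ (P e).head? = some (ι (M.tail e)) ∧
        (P e).getLast? = some (ι (M.head e))) ∧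
    (∀ e : U, ∀ w ∈ internals (P e), ¬ ∃ d : D, ι d = w) ∧
    (∀ e f : U, e ≠ f → ∀ w : D', w ∈ internals (P e) → w ∉ internals (P f)) ∧
    (∀ w : D', (∃ d : D, ι d = w) ∨ ∃ e : U, w ∈ internals (P e)) ∧
    (∀ a : U', ∃ (e : U) (l₁ l₂ : List D'),
        P e = l₁ ++ M'.tail a :: M'.head a :: l₂)


section FoldConstruction

open Classical

/-- species `s` has at least two leaves -/
def Big (χ : S → Set D) (s : S) : Prop := ∃ d₁ ∈ χ s, ∃ d₂ ∈ χ s, d₁ ≠ d₂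

/-- leaf `d` belongs to a species with at least two leaves -/
def Subd (χ : S → Set D) (d : D) : Prop := ∃ s, Big χ s ∧ d ∈ χ s

/-- the species of a leaf `d` (with default `x0`) -/
noncomputable def spc (χ : S → Set D) (x0 : S) (d : D) : S :=
  if h : Subd χ d then h.choose else if h2 : ∃ s, d ∈ χ s then h2.choose else x0

lemma spc_big {χ : S → Set D} {x0 : S} {d : D} (h : Subd χ d) :
    Big χ (spc χ x0 d) ∧ d ∈ χ (spc χ x0 d) := by
  rw [spc, dif_pos h]; exact ⟨h.choose_spec.1, h.choose_spec.2⟩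

section Facts

variable {M : MGraph D U} {lvM : Set D} {ρM : D} {χ : S → Set D} {x0 : S}

lemma spc_eq (hM : IsMULTree M lvM ρM χ) {d : D} {s : S} (hd : d ∈ χ s) :
    spc χ x0 d = s := by
  by_contra hne
  rcases (Classical.em (Subd χ d)) with h | h
  · rw [spc, dif_pos h] at hne
    exact Set.disjoint_left.mp (hM.1.chi_disj _ _ hne) h.choose_spec.2 hd
  · have h2 : ∃ s, d ∈ χ s := ⟨s, hd⟩
    rw [spc, dif_neg h, dif_pos h2] at hne
    exact Set.disjoint_left.mp (hM.1.chi_disj _ _ hne) h2.choose_spec hd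

lemma mem_spc (hM : IsMULTree M lvM ρM χ){d : D} (hd : d ∈ lvM) : d ∈ χ (spc χ x0 d) := by
  rcases (Classical.em (Subd χ d)) with h | h
  · exact (spc_big h).2
  · obtain ⟨s, hs⟩ := hM.1.chi_cover d hd
    rw [spc_eq (x0 := x0) hM hs]; exact hs

lemma subd_lv (hM : IsMULTree M lvM ρM χ){d : D} (h : Subd χ d) : d ∈ lvM := by
  obtain ⟨s, _, hd⟩ := h; exact hM.1.chi_sub s hd

lemma lv_spc_subd (hM : IsMULTree M lvM ρM χ){d : D} (hd : d ∈ lvM) (hb : Big χ (spc χ x0 d)) : Subd χ d :=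
  ⟨spc χ x0 d, hb, mem_spc hM hd⟩

lemma tail_nlv (hM : IsMULTree M lvM ρM χ)(u : U) : M.tail u ∉ lvM := by
  intro h
  have h0 := ((hM.1.leaf_iff _).mp h).1
  haveI := hM.1.finU
  haveI : Nonempty {e : U // M.tail e = M.tail u} := ⟨⟨u, rfl⟩⟩
  have : 0 < M.outDeg (M.tail u) := Nat.card_pos
  rw [h0] at this; exact Nat.lt_irrefl 0 this

lemma no_self (hM : IsMULTree M lvM ρM χ)(u : U) : M.head u ≠ M.tail u := fun h =>
  hM.1.acyclic (M.tail u) (Relation.TransGen.single ⟨u, rfl, h⟩)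

lemma root_nlv (hM : IsMULTree M lvM ρM χ) : ρM ∉ lvM := by
  intro h
  have h1 := ((hM.1.leaf_iff _).mp h).2
  rw [hM.1.root_in] at h1; exact absurd h1 (by norm_num)

lemma inDeg_one_unique [Finite U] {d : D} (h : M.inDeg d = 1) :
    ∃ u : U, M.head u = d ∧ ∀ v : U, M.head v = d → v = u := by
  obtain ⟨hs, ⟨⟨u, hu⟩⟩⟩ := Nat.card_eq_one_iff_unique.mp h
  exact ⟨u, hu, fun v hv => congrArg Subtype.val (hs.allEq ⟨v, hv⟩ ⟨u, hu⟩)⟩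

lemma outDeg_one_unique [Finite U] {d : D} (h : M.outDeg d = 1) :
    ∃ u : U, M.tail u = d ∧ ∀ v : U, M.tail v = d → v = u := by
  obtain ⟨hs, ⟨⟨u, hu⟩⟩⟩ := Nat.card_eq_one_iff_unique.mp h
  exact ⟨u, hu, fun v hv => congrArg Subtype.val (hs.allEq ⟨v, hv⟩ ⟨u, hu⟩)⟩

lemma leaf_inDeg_one (hM : IsMULTree M lvM ρM χ){d : D} (hd : d ∈ lvM) : M.inDeg d = 1 :=
  ((hM.1.leaf_iff _).mp hd).2

lemma leaf_in_unique (hM : IsMULTree M lvM ρM χ){d : D} (hd : d ∈ lvM) :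
    ∃ u : U, M.head u = d ∧ ∀ v : U, M.head v = d → v = u := by
  haveI := hM.1.finU
  exact inDeg_one_unique (leaf_inDeg_one hM hd)

lemma no_out_of_leaf (hM : IsMULTree M lvM ρM χ){d : D} (hd : d ∈ lvM) (u : U) : M.tail u ≠ d := by
  intro h; exact tail_nlv hM u (h ▸ hd)

lemma reach_root (hM : IsMULTree M lvM ρM χ)(v : D) : M.Reach ρM v := by
  haveI := hM.1.finD
  haveI := hM.1.finU
  have hpar : ∀ w : D, w ≠ ρM → ∃ u : U, M.head u = w := by
    intro w hw
    rcases Classical.em (w ∈ lvM) with h | h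
    · obtain ⟨u, hu, _⟩ := leaf_in_unique hM h; exact ⟨u, hu⟩
    · have h1 := (hM.1.inner_deg w h hw).1
      obtain ⟨u, hu, _⟩ := inDeg_one_unique (M := M) h1
      exact ⟨u, hu⟩
  set g : D → D := fun w => if h : w = ρM then ρM else M.tail (hpar w h).choose with hg_def
  have hg : ∀ w, w ≠ ρM → M.Adj (g w) w := by
    intro w h
    refine ⟨(hpar w h).choose, ?_, (hpar w h).choose_spec⟩
    simp only [hg_def, dif_neg h]
  have key : ∀ n w, g^[n] w = ρM → M.Reach ρM w := by
    intro n
    induction n with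
    | zero => intro w h; rw [Function.iterate_zero_apply] at h; exact h ▸ Relation.ReflTransGen.refl
    | succ n ih =>
      intro w h
      rcases Classical.em (w = ρM) with hw | hw
      · exact hw ▸ Relation.ReflTransGen.refl
      · rw [Function.iterate_succ_apply] at h
        exact Relation.ReflTransGen.tail (ih (g w) h) (hg w hw)
  rcases Classical.em (∃ n, g^[n] v = ρM) with h | h
  · obtain ⟨n, hn⟩ := h; exact key n v hn
  · exfalso
    push_neg at h
    have step : ∀ k, M.Adj (g^[k+1] v) (g^[k] v) := by
      intro k; rw [Function.iterate_succ_apply']; exact hg _ (h k)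
    have chain : ∀ p k, Relation.TransGen M.Adj (g^[k + p + 1] v) (g^[k] v) := by
      intro p
      induction p with
      | zero => intro k; exact Relation.TransGen.single (step k)
      | succ p ih =>
        intro k
        have h1 : Relation.TransGen M.Adj (g^[(k+p+1)+1] v) (g^[k] v) :=
          Relation.TransGen.head (step (k+p+1)) (ih k)
        have : k + (p+1) + 1 = (k+p+1)+1 := by omega
        rwa [this]
    obtain ⟨m, n, hmn, heq⟩ := Finite.exists_ne_map_eq_of_infinite (fun n => g^[n] v)
    rcases Nat.lt_or_ge m n with hlt | hge
    · have h1 := chain (n - m - 1) m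
      have : m + (n - m - 1) + 1 = n := by omega
      rw [this, ← heq] at h1
      exact hM.1.acyclic _ h1
    · have hlt : n < m := lt_of_le_of_ne hge (fun h => hmn h.symm)
      have h1 := chain (m - n - 1) n
      have : n + (m - n - 1) + 1 = m := by omega
      rw [this, heq] at h1
      exact hM.1.acyclic _ h1

lemma two_leaves_M (hM : IsMULTree M lvM ρM χ) : ∃ a b : D, a ∈ lvM ∧ b ∈ lvM ∧ a ≠ b := by
  obtain ⟨x, y, hxy⟩ := hM.1.species_nontriv
  obtain ⟨a, ha⟩ := hM.1.chi_ne x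
  obtain ⟨b, hb⟩ := hM.1.chi_ne y
  refine ⟨a, b, hM.1.chi_sub x ha, hM.1.chi_sub y hb, ?_⟩
  intro h
  exact Set.disjoint_left.mp (hM.1.chi_disj x y hxy) ha (h ▸ hb)

lemma root_child_props (hM : IsMULTree M lvM ρM χ){c : D} (hc : M.Adj ρM c) :
    c ∉ lvM ∧ c ≠ ρM ∧ M.inDeg c = 1 ∧ 2 ≤ M.outDeg c := by
  haveI := hM.1.finU
  have hcρ : c ≠ ρM := by
    intro h; exact hM.1.acyclic ρM (Relation.TransGen.single (h ▸ hc))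
  have hclv : c ∉ lvM := by
    intro hlv
    obtain ⟨a, b, ha, hb, hab⟩ := two_leaves_M hM
    have hall : ∀ l, l ∈ lvM → l = c := by
      intro l hl
      have hreach : M.Reach ρM l := reach_root hM l
      have hlρ : l ≠ ρM := fun h => root_nlv hM (h ▸ hl)
      rcases Relation.ReflTransGen.cases_head hreach with h | ⟨m, hm, hml⟩
      · exact absurd h.symm hlρ
      · obtain ⟨u0, hu0, hu0all⟩ := outDeg_one_unique (M := M) hM.1.root_out
        obtain ⟨e, he1, he2⟩ := hc
        obtain ⟨f, hf1, hf2⟩ := hm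
        have : e = u0 := hu0all e he1
        have : f = u0 := hu0all f hf1
        have hmc : m = c := by rw [← hf2, ‹f = u0›, ← ‹e = u0›, he2]
        subst hmc
        rcases Relation.ReflTransGen.cases_head hml with h | ⟨k, hk, _⟩
        · exact h.symm
        · obtain ⟨w, hw1, _⟩ := hk
          exact absurd hw1 (no_out_of_leaf hM hlv w)
    exact hab ((hall a ha).trans (hall b hb).symm)
  obtain ⟨h1, h2⟩ := hM.1.inner_deg c hclv hcρ
  exact ⟨hclv, hcρ, h1, hM.2 c hclv hcρ⟩

lemma root_child_not_leaf (hM : IsMULTree M lvM ρM χ){u : U} (hu : M.tail u = ρM) : M.head u ∉ lvM :=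
  (root_child_props hM ⟨u, hu, rfl⟩).1

lemma finS (hM : IsMULTree M lvM ρM χ) : Finite S := by
  haveI := hM.1.finD
  refine Finite.of_injective (fun s => (hM.1.chi_ne s).choose) ?_
  intro s t hst
  by_contra hne
  have h1 : (hM.1.chi_ne s).choose ∈ χ s := (hM.1.chi_ne s).choose_spec
  have h2 : (hM.1.chi_ne t).choose ∈ χ t := (hM.1.chi_ne t).choose_spec
  simp only at hst
  rw [hst] at h1
  exact Set.disjoint_left.mp (hM.1.chi_disj s t hne) h1 h2

end Facts

lemma card_sum_subtype {α β : Type} [Finite α] [Finite β] (p : α ⊕ β → Prop) :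
    Nat.card {x // p x} = Nat.card {a // p (Sum.inl a)} + Nat.card {b // p (Sum.inr b)} := by
  rw [Nat.card_congr (Equiv.subtypeSum (p := p)), Nat.card_sum]


section NetDef

/-- The folded network: inner vertices of `M`, one leaf per species, and one
hybrid vertex per species with at least two leaves. -/
noncomputable def NetN (M : MGraph D U) (lvM : Set D) (χ : S → Set D) (x0 : S) :
    MGraph ({d : D // d ∉ lvM} ⊕ (S ⊕ {s : S // Big χ s})) (U ⊕ {s : S // Big χ s}) where
  tail e :=
    match e with
    | Sum.inl u => if h : M.tail u ∉ lvM then Sum.inl ⟨M.tail u, h⟩ else Sum.inr (Sum.inl x0)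
    | Sum.inr s => Sum.inr (Sum.inr s)
  head e :=
    match e with
    | Sum.inl u =>
        if h : M.head u ∉ lvM then Sum.inl ⟨M.head u, h⟩
        else if hb : Big χ (spc χ x0 (M.head u)) then
          Sum.inr (Sum.inr ⟨spc χ x0 (M.head u), hb⟩)
        else Sum.inr (Sum.inl (spc χ x0 (M.head u)))
    | Sum.inr s => Sum.inr (Sum.inl s.1)

variable {M : MGraph D U} {lvM : Set D} {ρM : D} {χ : S → Set D} {x0 : S}

lemma netN_tail_inl (hM : IsMULTree M lvM ρM χ) (u : U) :
    (NetN M lvM χ x0).tail (Sum.inl u) = Sum.inl ⟨M.tail u, tail_nlv hM u⟩ := by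
  simp only [NetN]
  rw [dif_pos (tail_nlv hM u)]

lemma netN_tail_inr (s : {s : S // Big χ s}) :
    (NetN M lvM χ x0).tail (Sum.inr s) = Sum.inr (Sum.inr s) := rfl

lemma netN_head_inr (s : {s : S // Big χ s}) :
    (NetN M lvM χ x0).head (Sum.inr s) = Sum.inr (Sum.inl s.1) := rfl

lemma netN_head_inl_nlv (u : U) (h : M.head u ∉ lvM) :
    (NetN M lvM χ x0).head (Sum.inl u) = Sum.inl ⟨M.head u, h⟩ := by
  simp only [NetN]
  rw [dif_pos h]

lemma netN_head_inl_big (u : U) (h : M.head u ∈ lvM)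
    (hb : Big χ (spc χ x0 (M.head u))) :
    (NetN M lvM χ x0).head (Sum.inl u) = Sum.inr (Sum.inr ⟨spc χ x0 (M.head u), hb⟩) := by
  simp only [NetN]
  rw [dif_neg (not_not_intro h), dif_pos hb]

lemma netN_head_inl_small (u : U) (h : M.head u ∈ lvM)
    (hb : ¬ Big χ (spc χ x0 (M.head u))) :
    (NetN M lvM χ x0).head (Sum.inl u) = Sum.inr (Sum.inl (spc χ x0 (M.head u))) := by
  simp only [NetN]
  rw [dif_neg (not_not_intro h), dif_neg hb]

lemma netN_inDeg_inl (hM : IsMULTree M lvM ρM χ) (d : {d : D // d ∉ lvM}) :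
    (NetN M lvM χ x0).inDeg (Sum.inl d) = M.inDeg d.1 := by
  haveI := hM.1.finU; haveI := finS hM
  rw [MGraph.inDeg, card_sum_subtype]
  have h2 : IsEmpty {s : {s : S // Big χ s} //
      (NetN M lvM χ x0).head (Sum.inr s) = Sum.inl d} := by
    constructor; rintro ⟨s, hs⟩; rw [netN_head_inr] at hs; simp at hs
  haveI := h2
  rw [Nat.card_of_isEmpty (α := {s : {s : S // Big χ s} //
      (NetN M lvM χ x0).head (Sum.inr s) = Sum.inl d}), Nat.add_zero, MGraph.inDeg]
  apply Nat.card_congr (Equiv.subtypeEquivRight _)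
  intro u
  constructor
  · intro h
    rcases Classical.em (M.head u ∈ lvM) with hl | hl
    · rcases Classical.em (Big χ (spc χ x0 (M.head u))) with hb | hb
      · rw [netN_head_inl_big u hl hb] at h; simp at h
      · rw [netN_head_inl_small u hl hb] at h; simp at h
    · rw [netN_head_inl_nlv u hl] at h
      simpa [Subtype.ext_iff] using h
  · intro h
    have hl : M.head u ∉ lvM := by rw [h]; exact d.2
    rw [netN_head_inl_nlv u hl]
    simp [Subtype.ext_iff, h]

lemma netN_outDeg_inl (hM : IsMULTree M lvM ρM χ) (d : {d : D // d ∉ lvM}) :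
    (NetN M lvM χ x0).outDeg (Sum.inl d) = M.outDeg d.1 := by
  haveI := hM.1.finU; haveI := finS hM
  rw [MGraph.outDeg, card_sum_subtype]
  have h2 : IsEmpty {s : {s : S // Big χ s} //
      (NetN M lvM χ x0).tail (Sum.inr s) = Sum.inl d} := by
    constructor; rintro ⟨s, hs⟩; rw [netN_tail_inr] at hs; simp at hs
  haveI := h2
  rw [Nat.card_of_isEmpty (α := {s : {s : S // Big χ s} //
      (NetN M lvM χ x0).tail (Sum.inr s) = Sum.inl d}), Nat.add_zero, MGraph.outDeg]
  apply Nat.card_congr (Equiv.subtypeEquivRight _)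
  intro u
  constructor
  · intro h
    rw [netN_tail_inl hM u] at h
    simpa [Subtype.ext_iff] using h
  · intro h
    rw [netN_tail_inl hM u]
    simp [Subtype.ext_iff, h]

lemma netN_outDeg_leaf (hM : IsMULTree M lvM ρM χ) (s : S) :
    (NetN M lvM χ x0).outDeg (Sum.inr (Sum.inl s)) = 0 := by
  haveI := hM.1.finU; haveI := finS hM
  rw [MGraph.outDeg, card_sum_subtype]
  have h1 : IsEmpty {u : U // (NetN M lvM χ x0).tail (Sum.inl u) = Sum.inr (Sum.inl s)} := by
    constructor; rintro ⟨u, hu⟩; rw [netN_tail_inl hM u] at hu; simp at hu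
  have h2 : IsEmpty {t : {s : S // Big χ s} //
      (NetN M lvM χ x0).tail (Sum.inr t) = Sum.inr (Sum.inl s)} := by
    constructor; rintro ⟨t, ht⟩; rw [netN_tail_inr] at ht; simp at ht
  haveI := h1; haveI := h2
  rw [Nat.card_of_isEmpty (α := {u : U //
      (NetN M lvM χ x0).tail (Sum.inl u) = Sum.inr (Sum.inl s)}),
    Nat.card_of_isEmpty (α := {t : {s : S // Big χ s} //
      (NetN M lvM χ x0).tail (Sum.inr t) = Sum.inr (Sum.inl s)})]

lemma netN_outDeg_hyb (hM : IsMULTree M lvM ρM χ) (s : {s : S // Big χ s}) :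
    (NetN M lvM χ x0).outDeg (Sum.inr (Sum.inr s)) = 1 := by
  haveI := hM.1.finU; haveI := finS hM
  rw [MGraph.outDeg, card_sum_subtype]
  have h1 : IsEmpty {u : U //
      (NetN M lvM χ x0).tail (Sum.inl u) = Sum.inr (Sum.inr s)} := by
    constructor; rintro ⟨u, hu⟩; rw [netN_tail_inl hM u] at hu; simp at hu
  haveI := h1
  rw [Nat.card_of_isEmpty (α := {u : U //
      (NetN M lvM χ x0).tail (Sum.inl u) = Sum.inr (Sum.inr s)}), Nat.zero_add]
  rw [Nat.card_eq_one_iff_unique]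
  constructor
  · constructor
    rintro ⟨a, ha⟩ ⟨b, hb⟩
    rw [netN_tail_inr] at ha hb
    simp only [Sum.inr.injEq] at ha hb
    exact Subtype.ext (ha.trans hb.symm)
  · exact ⟨⟨s, rfl⟩⟩

lemma netN_inDeg_leaf (hM : IsMULTree M lvM ρM χ) (s : S) :
    (NetN M lvM χ x0).inDeg (Sum.inr (Sum.inl s)) = 1 := by
  haveI := hM.1.finU; haveI := finS hM; haveI := hM.1.finD
  rw [MGraph.inDeg, card_sum_subtype]
  rcases Classical.em (Big χ s) with hb | hb
  · have h1 : IsEmpty {u : U //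
        (NetN M lvM χ x0).head (Sum.inl u) = Sum.inr (Sum.inl s)} := by
      constructor; rintro ⟨u, hu⟩
      rcases Classical.em (M.head u ∈ lvM) with hl | hl
      · rcases Classical.em (Big χ (spc χ x0 (M.head u))) with hb' | hb'
        · rw [netN_head_inl_big u hl hb'] at hu; simp at hu
        · rw [netN_head_inl_small u hl hb'] at hu
          simp only [Sum.inr.injEq, Sum.inl.injEq] at hu
          rw [hu] at hb'; exact hb' hb
      · rw [netN_head_inl_nlv u hl] at hu; simp at hu
    haveI := h1
    rw [Nat.card_of_isEmpty (α := {u : U //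
        (NetN M lvM χ x0).head (Sum.inl u) = Sum.inr (Sum.inl s)}), Nat.zero_add,
      Nat.card_eq_one_iff_unique]
    constructor
    · constructor
      rintro ⟨a, ha⟩ ⟨b, hb'⟩
      rw [netN_head_inr] at ha hb'
      simp only [Sum.inr.injEq, Sum.inl.injEq] at ha hb'
      exact Subtype.ext (Subtype.ext (ha.trans hb'.symm))
    · exact ⟨⟨⟨s, hb⟩, rfl⟩⟩
  · have h2 : IsEmpty {t : {s : S // Big χ s} //
        (NetN M lvM χ x0).head (Sum.inr t) = Sum.inr (Sum.inl s)} := by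
      constructor; rintro ⟨t, ht⟩
      rw [netN_head_inr] at ht
      simp only [Sum.inr.injEq, Sum.inl.injEq] at ht
      exact hb (ht ▸ t.2)
    haveI := h2
    rw [Nat.card_of_isEmpty (α := {t : {s : S // Big χ s} //
        (NetN M lvM χ x0).head (Sum.inr t) = Sum.inr (Sum.inl s)}), Nat.add_zero]
    set d0 := (hM.1.chi_ne s).choose with hd0_def
    have hd0 : d0 ∈ χ s := (hM.1.chi_ne s).choose_spec
    have hsing : ∀ d ∈ χ s, d = d0 := by
      intro d hd
      by_contra hne
      exact hb ⟨d, hd, d0, hd0, hne⟩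
    have hiff : ∀ u : U,
        (NetN M lvM χ x0).head (Sum.inl u) = Sum.inr (Sum.inl s) ↔ M.head u = d0 := by
      intro u
      constructor
      · intro h
        rcases Classical.em (M.head u ∈ lvM) with hl | hl
        · rcases Classical.em (Big χ (spc χ x0 (M.head u))) with hb' | hb'
          · rw [netN_head_inl_big u hl hb'] at h; simp at h
          · rw [netN_head_inl_small u hl hb'] at h
            simp only [Sum.inr.injEq, Sum.inl.injEq] at h
            exact hsing _ (h ▸ mem_spc hM hl)
        · rw [netN_head_inl_nlv u hl] at h; simp at h
      · intro h
        have hmem : M.head u ∈ χ s := h ▸ hd0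
        have hl : M.head u ∈ lvM := hM.1.chi_sub s hmem
        have hspc : spc χ x0 (M.head u) = s := spc_eq hM hmem
        rw [netN_head_inl_small u hl (by rw [hspc]; exact hb), hspc]
    rw [Nat.card_congr (Equiv.subtypeEquivRight hiff)]
    exact leaf_inDeg_one hM (hM.1.chi_sub s hd0)

lemma netN_inDeg_hyb (hM : IsMULTree M lvM ρM χ) (s : {s : S // Big χ s}) :
    2 ≤ (NetN M lvM χ x0).inDeg (Sum.inr (Sum.inr s)) := by
  haveI := hM.1.finU; haveI := finS hM; haveI := hM.1.finD
  obtain ⟨d₁, hd₁, d₂, hd₂, hne⟩ := s.2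
  obtain ⟨u₁, hu₁, -⟩ := leaf_in_unique hM (hM.1.chi_sub s.1 hd₁)
  obtain ⟨u₂, hu₂, -⟩ := leaf_in_unique hM (hM.1.chi_sub s.1 hd₂)
  have harc : ∀ (d : D) (u : U), d ∈ χ s.1 → M.head u = d →
      (NetN M lvM χ x0).head (Sum.inl u) = Sum.inr (Sum.inr s) := by
    intro d u hd hu
    have hl : M.head u ∈ lvM := hu ▸ hM.1.chi_sub s.1 hd
    have hspc : spc χ x0 (M.head u) = s.1 := spc_eq hM (hu ▸ hd)
    rw [netN_head_inl_big u hl (by rw [hspc]; exact s.2)]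
    simp only [Sum.inr.injEq]
    exact Subtype.ext hspc
  have hne' : u₁ ≠ u₂ := by
    intro h; rw [h, hu₂] at hu₁; exact hne hu₁.symm
  have : Nontrivial {e : U ⊕ {s : S // Big χ s} //
      (NetN M lvM χ x0).head e = Sum.inr (Sum.inr s)} := by
    refine ⟨⟨Sum.inl u₁, harc d₁ u₁ hd₁ hu₁⟩, ⟨Sum.inl u₂, harc d₂ u₂ hd₂ hu₂⟩, ?_⟩
    intro h
    simp only [Subtype.mk.injEq, Sum.inl.injEq] at h
    exact hne' h
  exact Finite.one_lt_card_iff_nontrivial.mpr this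

lemma netN_adj_to_inl (hM : IsMULTree M lvM ρM χ)
    {w : {d : D // d ∉ lvM} ⊕ (S ⊕ {s : S // Big χ s})} {d' : {d : D // d ∉ lvM}}
    (h : (NetN M lvM χ x0).Adj w (Sum.inl d')) :
    ∃ d, w = Sum.inl d ∧ M.Adj d.1 d'.1 := by
  obtain ⟨e, ht, hh⟩ := h
  match e with
  | Sum.inr s => rw [netN_head_inr] at hh; simp at hh
  | Sum.inl u =>
    rcases Classical.em (M.head u ∈ lvM) with hl | hl
    · rcases Classical.em (Big χ (spc χ x0 (M.head u))) with hb' | hb'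
      · rw [netN_head_inl_big u hl hb'] at hh; simp at hh
      · rw [netN_head_inl_small u hl hb'] at hh; simp at hh
    · rw [netN_head_inl_nlv u hl] at hh
      rw [netN_tail_inl hM u] at ht
      refine ⟨⟨M.tail u, tail_nlv hM u⟩, ht.symm, ⟨u, rfl, ?_⟩⟩
      simp only [Sum.inl.injEq] at hh
      rw [← hh]

lemma netN_no_out_leaf (hM : IsMULTree M lvM ρM χ) (s : S)
    (w : {d : D // d ∉ lvM} ⊕ (S ⊕ {s : S // Big χ s})) :
    ¬ (NetN M lvM χ x0).Adj (Sum.inr (Sum.inl s)) w := by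
  rintro ⟨e, ht, -⟩
  match e with
  | Sum.inl u => rw [netN_tail_inl hM u] at ht; simp at ht
  | Sum.inr t => rw [netN_tail_inr] at ht; simp at ht

lemma netN_adj_from_hyb (hM : IsMULTree M lvM ρM χ) {s : {s : S // Big χ s}}
    {w : {d : D // d ∉ lvM} ⊕ (S ⊕ {s : S // Big χ s})}
    (h : (NetN M lvM χ x0).Adj (Sum.inr (Sum.inr s)) w) : w = Sum.inr (Sum.inl s.1) := by
  obtain ⟨e, ht, hh⟩ := h
  match e with
  | Sum.inl u => rw [netN_tail_inl hM u] at ht; simp at ht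
  | Sum.inr t =>
    rw [netN_tail_inr] at ht
    simp only [Sum.inr.injEq] at ht
    rw [netN_head_inr] at hh
    rw [← hh, ht]

lemma netN_acyclic (hM : IsMULTree M lvM ρM χ) : (NetN M lvM χ x0).Acyclic := by
  have key : ∀ w w', Relation.TransGen (NetN M lvM χ x0).Adj w w' →
      ∀ d d', w = Sum.inl d → w' = Sum.inl d' → Relation.TransGen M.Adj d.1 d'.1 := by
    intro w w' h
    induction h with
    | single h =>
      intro d d' hw hw'
      subst hw; subst hw'
      obtain ⟨d₀, hd₀, hadj⟩ := netN_adj_to_inl hM h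
      simp only [Sum.inl.injEq] at hd₀
      exact Relation.TransGen.single (hd₀ ▸ hadj)
    | tail hab hbc ih =>
      intro d d' hw hw'
      subst hw; subst hw'
      obtain ⟨d₀, hd₀, hadj⟩ := netN_adj_to_inl hM hbc
      exact Relation.TransGen.tail (ih d d₀ rfl hd₀) hadj
  intro w hw
  match w with
  | Sum.inl d => exact hM.1.acyclic d.1 (key _ _ hw d d rfl rfl)
  | Sum.inr (Sum.inl s) =>
    obtain ⟨c, hc, -⟩ := Relation.TransGen.head'_iff.mp hw
    exact netN_no_out_leaf hM s _ hc
  | Sum.inr (Sum.inr s) =>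
    obtain ⟨c, hc, hcw⟩ := Relation.TransGen.head'_iff.mp hw
    have hc' := netN_adj_from_hyb hM hc
    subst hc'
    rcases Relation.ReflTransGen.cases_head hcw with h | ⟨z, hz, -⟩
    · simp at h
    · exact netN_no_out_leaf hM s.1 _ hz

lemma netN_isNetwork (hM : IsMULTree M lvM ρM χ) :
    IsNetwork (NetN M lvM χ x0)
      (Set.range (fun s : S => Sum.inr (Sum.inl s)))
      (Sum.inl ⟨ρM, root_nlv hM⟩) := by
  haveI := hM.1.finU; haveI := finS hM; haveI := hM.1.finD
  constructor
  · infer_instance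
  · infer_instance
  · exact netN_acyclic hM
  · rw [netN_inDeg_inl hM]; exact hM.1.root_in
  · rw [netN_outDeg_inl hM]; exact hM.1.root_out
  · -- root_child
    rintro c ⟨e, ht, hh⟩
    match e with
    | Sum.inr s => rw [netN_tail_inr] at ht; simp at ht
    | Sum.inl u =>
      rw [netN_tail_inl hM u] at ht
      simp only [Sum.inl.injEq, Subtype.mk.injEq] at ht
      have hρ : M.tail u = ρM := ht
      have hnl : M.head u ∉ lvM := root_child_not_leaf hM hρ
      obtain ⟨-, -, hin, hout⟩ := root_child_props hM ⟨u, hρ, rfl⟩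
      rw [netN_head_inl_nlv u hnl] at hh
      subst hh
      rw [netN_inDeg_inl hM, netN_outDeg_inl hM]
      exact ⟨hin, hout⟩
  · -- leaf_iff
    intro v
    constructor
    · rintro ⟨s, rfl⟩
      exact ⟨netN_outDeg_leaf hM s, netN_inDeg_leaf hM s⟩
    · intro ⟨hout, hin⟩
      match v with
      | Sum.inr (Sum.inl s) => exact ⟨s, rfl⟩
      | Sum.inr (Sum.inr s) =>
        rw [netN_outDeg_hyb hM] at hout; exact absurd hout one_ne_zero
      | Sum.inl d =>
        exfalso
        rw [netN_outDeg_inl hM] at hout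
        rcases Classical.em (d.1 = ρM) with h | h
        · rw [h, hM.1.root_out] at hout; exact one_ne_zero hout
        · have := hM.2 d.1 d.2 h
          rw [hout] at this; exact absurd this (by norm_num)
  · -- inner_deg
    intro v hv hρ
    match v with
    | Sum.inr (Sum.inl s) => exact absurd ⟨s, rfl⟩ hv
    | Sum.inr (Sum.inr s) =>
      exact Or.inr ⟨netN_inDeg_hyb hM s, netN_outDeg_hyb hM s⟩
    | Sum.inl d =>
      left
      have hd : d.1 ≠ ρM := by
        intro h
        apply hρ
        simp only [Sum.inl.injEq]
        exact Subtype.ext h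
      obtain ⟨h1, -⟩ := hM.1.inner_deg d.1 d.2 hd
      rw [netN_inDeg_inl hM, netN_outDeg_inl hM]
      exact ⟨h1, hM.2 d.1 d.2 hd⟩
  · -- two_leaves
    obtain ⟨x, y, hxy⟩ := hM.1.species_nontriv
    exact ⟨Sum.inr (Sum.inl x), Sum.inr (Sum.inl y), ⟨x, rfl⟩, ⟨y, rfl⟩, by simpa using hxy⟩

lemma netN_labeling (hM : IsMULTree M lvM ρM χ) :
    IsLeafLabeling (NetN M lvM χ x0) (Set.range (fun s : S => Sum.inr (Sum.inl s)))
      (fun s : S => Sum.inr (Sum.inl s)) := by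
  constructor
  · intro a b h; simpa using h
  · intro s; exact ⟨s, rfl⟩
  · rintro v ⟨s, rfl⟩; exact ⟨s, rfl⟩

end NetDef


section SubdivDef

/-- The subdivision of `M`: one new vertex inside each pendant arc whose leaf
belongs to a species with at least two leaves. -/
noncomputable def TreeM' (M : MGraph D U) (χ : S → Set D) :
    MGraph (D ⊕ {d : D // Subd χ d}) (U ⊕ {d : D // Subd χ d}) where
  tail a :=
    match a with
    | Sum.inl e => Sum.inl (M.tail e)
    | Sum.inr d => Sum.inr d
  head a :=
    match a with
    | Sum.inl e =>
        if h : Subd χ (M.head e) then Sum.inr ⟨M.head e, h⟩ else Sum.inl (M.head e)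
    | Sum.inr d => Sum.inl d.1

/-- The path replacing arc `e` in the subdivision. -/
noncomputable def subdivP (M : MGraph D U) (χ : S → Set D) (e : U) :
    List (D ⊕ {d : D // Subd χ d}) :=
  if h : Subd χ (M.head e) then
    [Sum.inl (M.tail e), Sum.inr ⟨M.head e, h⟩, Sum.inl (M.head e)]
  else [Sum.inl (M.tail e), Sum.inl (M.head e)]

/-- vertex part of the folding map -/
noncomputable def foldV (lvM : Set D) (χ : S → Set D) (x0 : S) :
    (D ⊕ {d : D // Subd χ d}) → ({d : D // d ∉ lvM} ⊕ (S ⊕ {s : S // Big χ s}))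
  | Sum.inl d =>
      if h : d ∉ lvM then Sum.inl ⟨d, h⟩ else Sum.inr (Sum.inl (spc χ x0 d))
  | Sum.inr d => Sum.inr (Sum.inr ⟨spc χ x0 d.1, (spc_big d.2).1⟩)

/-- arc part of the folding map -/
noncomputable def foldE (χ : S → Set D) (x0 : S) :
    (U ⊕ {d : D // Subd χ d}) → (U ⊕ {s : S // Big χ s})
  | Sum.inl e => Sum.inl e
  | Sum.inr d => Sum.inr ⟨spc χ x0 d.1, (spc_big d.2).1⟩

variable {M : MGraph D U} {lvM : Set D} {ρM : D} {χ : S → Set D} {x0 : S}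

lemma treeM'_tail_inl (e : U) :
    (TreeM' M χ).tail (Sum.inl e) = Sum.inl (M.tail e) := rfl

lemma treeM'_tail_inr (d : {d : D // Subd χ d}) :
    (TreeM' M χ).tail (Sum.inr d) = Sum.inr d := rfl

lemma treeM'_head_inr (d : {d : D // Subd χ d}) :
    (TreeM' M χ).head (Sum.inr d) = Sum.inl d.1 := rfl

lemma treeM'_head_inl_pos (e : U) (h : Subd χ (M.head e)) :
    (TreeM' M χ).head (Sum.inl e) = Sum.inr ⟨M.head e, h⟩ := by
  simp only [TreeM']; rw [dif_pos h]

lemma treeM'_head_inl_neg (e : U) (h : ¬ Subd χ (M.head e)) :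
    (TreeM' M χ).head (Sum.inl e) = Sum.inl (M.head e) := by
  simp only [TreeM']; rw [dif_neg h]

lemma subdivision (hM : IsMULTree M lvM ρM χ) :
    IsSubdivisionOf (TreeM' M χ) (Sum.inl '' lvM) (Sum.inl ρM)
      (fun x => Sum.inl '' χ x) M lvM ρM χ := by
  refine ⟨Sum.inl, subdivP M χ, Sum.inl_injective, rfl, rfl, fun x => rfl,
    ?_, ?_, ?_, ?_, ?_⟩
  · -- paths
    intro e
    have hne := no_self hM e
    rcases Classical.em (Subd χ (M.head e)) with h | h
    · rw [subdivP, dif_pos h]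
      refine ⟨⟨by simp, ?_, ?_⟩, by simp, by simp⟩
      · refine List.isChain_cons_cons.mpr ⟨⟨Sum.inl e, rfl, treeM'_head_inl_pos e h⟩,
          List.isChain_cons_cons.mpr ⟨⟨Sum.inr ⟨M.head e, h⟩, rfl, rfl⟩,
            List.isChain_singleton _⟩⟩
      · simp [List.nodup_cons, Ne.symm hne]
    · rw [subdivP, dif_neg h]
      refine ⟨⟨by simp, ?_, ?_⟩, by simp, by simp⟩
      · exact List.isChain_cons_cons.mpr ⟨⟨Sum.inl e, rfl, treeM'_head_inl_neg e h⟩,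
          List.isChain_singleton _⟩
      · simp [List.nodup_cons, Ne.symm hne]
  · -- internal vertices are new
    intro e w hw
    rcases Classical.em (Subd χ (M.head e)) with h | h
    · rw [subdivP, dif_pos h] at hw
      simp only [internals] at hw
      simp only [List.drop, List.dropLast, List.mem_singleton] at hw
      subst hw
      rintro ⟨d, hd⟩
      simp at hd
    · rw [subdivP, dif_neg h] at hw
      simp [internals] at hw
  · -- internal vertices of distinct paths are distinct
    intro e f hef w hwe hwf
    rcases Classical.em (Subd χ (M.head e)) with h | h
    · rcases Classical.em (Subd χ (M.head f)) with h' | h'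
      · rw [subdivP, dif_pos h] at hwe
        rw [subdivP, dif_pos h'] at hwf
        simp only [internals, List.drop, List.dropLast, List.mem_singleton] at hwe hwf
        rw [hwe] at hwf
        simp only [Sum.inr.injEq, Subtype.mk.injEq] at hwf
        have hlv : M.head e ∈ lvM := subd_lv hM h
        obtain ⟨u, hu, huniq⟩ := leaf_in_unique hM hlv
        exact hef ((huniq e rfl).trans (huniq f hwf.symm).symm)
      · rw [subdivP, dif_neg h'] at hwf
        simp [internals] at hwf
    · rw [subdivP, dif_neg h] at hwe
      simp [internals] at hwe
  · -- coverage
    intro w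
    match w with
    | Sum.inl d => exact Or.inl ⟨d, rfl⟩
    | Sum.inr d =>
      right
      have hdlv : d.1 ∈ lvM := subd_lv hM d.2
      obtain ⟨u, hu, -⟩ := leaf_in_unique hM hdlv
      refine ⟨u, ?_⟩
      rw [subdivP, dif_pos (hu ▸ d.2)]
      simp only [internals, List.drop, List.dropLast, List.mem_singleton]
      exact congrArg Sum.inr (Subtype.ext hu.symm)
  · -- every arc lies on a path
    intro a
    match a with
    | Sum.inl e =>
      rcases Classical.em (Subd χ (M.head e)) with h | h
      · refine ⟨e, [], [Sum.inl (M.head e)], ?_⟩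
        rw [subdivP, dif_pos h, treeM'_tail_inl, treeM'_head_inl_pos e h]
        rfl
      · refine ⟨e, [], [], ?_⟩
        rw [subdivP, dif_neg h, treeM'_tail_inl, treeM'_head_inl_neg e h]
        rfl
    | Sum.inr d =>
      obtain ⟨dv, hdv⟩ := d
      have hdlv : dv ∈ lvM := subd_lv hM hdv
      obtain ⟨u, hu, -⟩ := leaf_in_unique hM hdlv
      subst hu
      refine ⟨u, [Sum.inl (M.tail u)], [], ?_⟩
      rw [subdivP, dif_pos hdv, treeM'_tail_inr, treeM'_head_inr]
      rfl

lemma folding (hM : IsMULTree M lvM ρM χ) :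
    IsFoldingMap (TreeM' M χ) (Sum.inl '' lvM) (fun x => Sum.inl '' χ x)
      (NetN M lvM χ x0) (fun s : S => Sum.inr (Sum.inl s))
      (foldV lvM χ x0) (foldE χ x0) := by
  constructor
  · -- fV_surj
    rintro (⟨d, hd⟩ | (s | sb))
    · refine ⟨Sum.inl d, ?_⟩
      simp only [foldV]
      rw [dif_pos hd]
    · obtain ⟨d, hd⟩ := hM.1.chi_ne s
      have hdlv : d ∈ lvM := hM.1.chi_sub s hd
      refine ⟨Sum.inl d, ?_⟩
      simp only [foldV]
      rw [dif_neg (not_not_intro hdlv), spc_eq hM hd]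
    · obtain ⟨d, hd, -⟩ := sb.2
      have hsub : Subd χ d := ⟨sb.1, sb.2, hd⟩
      refine ⟨Sum.inr ⟨d, hsub⟩, ?_⟩
      simp only [foldV]
      exact congrArg Sum.inr (congrArg Sum.inr (Subtype.ext (spc_eq hM hd)))
  · -- fE_surj
    rintro (e | sb)
    · exact ⟨Sum.inl e, rfl⟩
    · obtain ⟨d, hd, -⟩ := sb.2
      have hsub : Subd χ d := ⟨sb.1, sb.2, hd⟩
      refine ⟨Sum.inr ⟨d, hsub⟩, ?_⟩
      simp only [foldE]
      exact congrArg Sum.inr (Subtype.ext (spc_eq hM hd))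
  · -- F1t
    intro a
    match a with
    | Sum.inl e =>
      simp only [foldE, treeM'_tail_inl]
      rw [netN_tail_inl hM]
      simp only [foldV]
      rw [dif_pos (tail_nlv hM e)]
    | Sum.inr d =>
      simp only [foldE, treeM'_tail_inr]
      rw [netN_tail_inr]
      simp only [foldV]
  · -- F1h
    intro a
    match a with
    | Sum.inl e =>
      rcases Classical.em (M.head e ∈ lvM) with hl | hl
      · rcases Classical.em (Big χ (spc χ x0 (M.head e))) with hb | hb
        · have hsub : Subd χ (M.head e) := lv_spc_subd hM hl hb
          simp only [foldE]
          rw [netN_head_inl_big e hl hb, treeM'_head_inl_pos e hsub]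
          simp only [foldV]
        · have hsub : ¬ Subd χ (M.head e) := fun h => hb (spc_big h).1
          simp only [foldE]
          rw [netN_head_inl_small e hl hb, treeM'_head_inl_neg e hsub]
          simp only [foldV]
          rw [dif_neg (not_not_intro hl)]
      · have hsub : ¬ Subd χ (M.head e) := fun h => hl (subd_lv hM h)
        simp only [foldE]
        rw [netN_head_inl_nlv e hl, treeM'_head_inl_neg e hsub]
        simp only [foldV]
        rw [dif_pos hl]
    | Sum.inr d =>
      rw [treeM'_head_inr]
      simp only [foldE]
      rw [netN_head_inr]
      simp only [foldV]
      rw [dif_neg (not_not_intro (subd_lv hM d.2))]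
  · -- F2
    rintro v ⟨d, hd, rfl⟩ x ⟨d', hd', hdd'⟩
    simp only [Sum.inl.injEq] at hdd'
    subst hdd'
    simp only [foldV]
    rw [dif_neg (not_not_intro hd), spc_eq hM hd']
  · -- F3
    intro a v hv
    match a with
    | Sum.inl e =>
      rw [netN_tail_inl hM] at hv
      match v with
      | Sum.inr d => simp [foldV] at hv
      | Sum.inl d =>
        simp only [foldV] at hv
        rcases Classical.em (d ∉ lvM) with h | h
        · rw [dif_pos h] at hv
          simp only [Sum.inl.injEq, Subtype.mk.injEq] at hv
          refine ⟨Sum.inl e, ⟨rfl, by rw [treeM'_tail_inl, hv]⟩, ?_⟩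
          rintro (e' | d') ⟨hb1, hb2⟩
          · simp only [foldE, Sum.inl.injEq] at hb1; rw [hb1]
          · simp [foldE] at hb1
        · rw [dif_neg h] at hv
          simp at hv
    | Sum.inr s =>
      rw [netN_tail_inr] at hv
      match v with
      | Sum.inl d =>
        simp only [foldV] at hv
        rcases Classical.em (d ∉ lvM) with h | h
        · rw [dif_pos h] at hv; simp at hv
        · rw [dif_neg h] at hv; simp at hv
      | Sum.inr d =>
        simp only [foldV, Sum.inr.injEq] at hv
        refine ⟨Sum.inr d, ⟨?_, rfl⟩, ?_⟩
        · simp only [foldE]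
          rw [← hv]
        · rintro (e' | d') ⟨hb1, hb2⟩
          · simp [foldE] at hb1
          · rw [treeM'_tail_inr] at hb2
            simp only [Sum.inr.injEq] at hb2
            rw [hb2]

end SubdivDef

end FoldConstruction

/-- Every MUL-tree `(M,χ)` on `𝕊` can be folded into a network on
    `𝕊`: there exist a network `N` on `𝕊` and a subdivision `M'` of `M` together
    with a folding map from `(M',χ)` to `N`. -/
theorem mul_tree_foldable {D U S : Type}
    (M : MGraph D U) (lvM : Set D) (ρM : D) (χ : S → Set D)
    (hM : IsMULTree M lvM ρM χ) :
    ∃ (W F : Type) (N : MGraph W F) (lvN : Set W) (ρN : W) (spN : S → W),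
      IsNetwork N lvN ρN ∧ IsLeafLabeling N lvN spN ∧
      ∃ (D' U' : Type) (M' : MGraph D' U') (lvM' : Set D') (ρM' : D')
        (χ' : S → Set D'),
        IsSubdivisionOf M' lvM' ρM' χ' M lvM ρM χ ∧
        ∃ (fV : D' → W) (fE : U' → F), IsFoldingMap M' lvM' χ' N spN fV fE := by
  obtain ⟨x0, -, -⟩ := hM.1.species_nontriv
  exact ⟨_, _, NetN M lvM χ x0, _, _, _, netN_isNetwork hM, netN_labeling hM,
    _, _, TreeM' M χ, Sum.inl '' lvM, Sum.inl ρM, fun x => Sum.inl '' χ x,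
    subdivision hM, foldV lvM χ x0, foldE χ x0, folding hM⟩

end Phylo
end

section
/- Let f=(f_V,f_E) be a folding map from a pseudo MUL-tree (M=(D,U),χ) on 𝕊 to a network N=(W,F) on 𝕊. Then for any a,b ∈ D∪U with a ⪯_M b, we have g(a) ⪯_N g(b), where g(x)=f_V(x) if x∈D and g(x)=f_E(x) if x∈U. In particular, if a and b are distinct and not both arcs, then g(a) ≺_N g(b). -/
namespace Phylo

variable {V E W F D U S : Type}

/-- A folding map `f = (fV,fE)` from a pseudo MUL-tree `(M,χ)` on `𝕊`
    to a network `N` on `𝕊` is ancestor-preserving: for `a, b ∈ D ∪ U` with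
    `a ⪯_M b` we have `g(a) ⪯_N g(b)` (where `g = fV` on vertices and `g = fE` on
    arcs); in particular, if `a ≠ b` and not both are arcs, then `g(a) ≺_N g(b)`. -/
theorem folding_map_ancestor_preserving {D U W F S : Type}
    (M : MGraph D U) (lvM : Set D) (ρM : D) (χ : S → Set D)
    (hM : IsPMULTree M lvM ρM χ)
    (N : MGraph W F) (lvN : Set W) (ρN : W) (sp : S → W)
    (hN : IsNetwork N lvN ρN) (hsp : IsLeafLabeling N lvN sp)
    (fV : D → W) (fE : U → F) (hf : IsFoldingMap M lvM χ N sp fV fE) :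
    ∀ a b : D ⊕ U, M.sle a b →
      N.sle (Sum.map fV fE a) (Sum.map fV fE b) ∧
        (a ≠ b → ¬ (∃ (ea eb : U), a = Sum.inr ea ∧ b = Sum.inr eb) →
          N.slt (Sum.map fV fE a) (Sum.map fV fE b)) := by
  -- adjacency is preserved
  have hadj : ∀ u v : D, M.Adj u v → N.Adj (fV u) (fV v) := by
    rintro u v ⟨e, ht, hh⟩
    exact ⟨fE e, by rw [hf.F1t, ht], by rw [hf.F1h, hh]⟩
  have hreach : ∀ u v : D, M.Reach u v → N.Reach (fV u) (fV v) := by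
    intro u v h
    exact Relation.ReflTransGen.lift fV (fun a b => hadj a b) _ _ h
  -- strict reachability (vlt) is preserved, using acyclicity of N
  have hvlt : ∀ u v : D, M.vlt u v → N.vlt (fV u) (fV v) := by
    rintro u v ⟨hr, hne⟩
    refine ⟨hreach _ _ hr, ?_⟩
    intro heq
    rcases (Relation.reflTransGen_iff_eq_or_transGen.mp hr) with h | h
    · first | exact hne h | exact hne h.symm
    · have : Relation.TransGen N.Adj (fV v) (fV u) :=
        Relation.TransGen.lift fV (fun a b => hadj a b) _ _ h
      rw [heq] at this
      exact hN.acyclic _ this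
  -- no loops in N
  have hnl : ∀ e : F, N.head e ≠ N.tail e := by
    intro e heq
    exact hN.acyclic (N.tail e) (Relation.TransGen.single ⟨e, rfl, heq⟩)
  -- strict order is preserved
  have hslt : ∀ a b : D ⊕ U, M.slt a b → N.slt (Sum.map fV fE a) (Sum.map fV fE b) := by
    rintro (x | e) (y | f) h
    · exact hvlt _ _ h
    · show N.vle (fV x) (N.head (fE f))
      rw [hf.F1h]; exact hreach _ _ h
    · show N.vle (N.tail (fE e)) (fV y)
      rw [hf.F1t]; exact hreach _ _ h
    · obtain ⟨h1, h2, h3⟩ := h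
      refine ⟨⟨?_, hnl _⟩, ?_, ⟨?_, hnl _⟩⟩
      · rw [hf.F1t, hf.F1h]; exact hreach _ _ h1.1
      · rw [hf.F1t, hf.F1h]; exact hreach _ _ h2
      · rw [hf.F1t, hf.F1h]; exact hreach _ _ h3.1
  intro a b hab
  rcases hab with rfl | h
  · exact ⟨Or.inl rfl, fun hne _ => absurd rfl hne⟩
  · exact ⟨Or.inr (hslt a b h), fun _ _ => hslt a b h⟩

end Phylo
end
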